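/- arXiv:2012.14064 — 4 statements merged into one kernel-verified Lean document; each statement's English description precedes it below -/
import Mathlib

section
/- Let 𝔐 be a generalized Kisin module of height h and let T = 𝔐[u^∞] := {x ∈ 𝔐 : u^l • x = 0 for some l} be its u-power-torsion submodule. Then φ_𝔐(T) ⊆ T; the map ψ sends T into the canonical image of φ*T in φ*𝔐 (which equals the u-power-torsion submodule of φ*𝔐); with the restricted maps, T is a generalized Kisin module of height h; and with the induced maps, the quotient 𝔐/T is a generalized Kisin module of height h on which multiplication by u is injective. Thus 0 → 𝔐[u^∞] → 𝔐 → 𝔐/𝔐[u^∞] → 0 is a short exact sequence of generalized Kisin modules of height h with étale quotient. (Lemma 6.3.) -/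
open PowerSeries

/-- The universal property characterizing `ι : M → P` as the base change of `M` along the
ring endomorphism `φ` (i.e. `P ≅ R ⊗_{φ,R} M` with `ι x = 1 ⊗ x`): every `φ`-semilinear
map out of `M` factors uniquely through an `R`-linear map out of `P`. -/
def IsSemilinearBaseChange {R : Type} [CommRing R] (φ : R →+* R)
    {M : Type} [AddCommGroup M] [Module R M]
    {P : Type} [AddCommGroup P] [Module R P] (ι : M →ₛₗ[φ] P) : Prop :=
  ∀ (Q : Type) [AddCommGroup Q] [Module R Q] (g : M →ₛₗ[φ] Q),
    ∃! h : P →ₗ[R] Q, ∀ x : M, h (ι x) = g x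

/-- The data exhibiting a module `M` as a *generalized Kisin module of height `hh`*
(relative to a ring endomorphism `φ` of `R` and an element `E : R`):
a `φ`-semilinear additive map `phiM : M → M`; a model `P` of the base change
`φ*M = R ⊗_{φ,R} M`, given by a `φ`-semilinear map `ι : M → P` satisfying the universal
property of base change; the linearization `lift = 1 ⊗ phiM : φ*M → M` (characterized by
`lift (ι x) = phiM x`); and an `R`-linear map `ψ : M → φ*M` such that
`ψ ∘ lift = E ^ hh • id` and `lift ∘ ψ = E ^ hh • id`. -/
structure GenKisinData {R : Type} [CommRing R] (φ : R →+* R) (E : R) (hh : ℕ)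
    (M : Type) [AddCommGroup M] [Module R M] : Type 1 where
  phiM : M →ₛₗ[φ] M
  P : Type
  [addCommGroupP : AddCommGroup P]
  [moduleP : Module R P]
  ι : M →ₛₗ[φ] P
  isBaseChange : IsSemilinearBaseChange φ ι
  lift : P →ₗ[R] M
  lift_ι : ∀ x : M, lift (ι x) = phiM x
  ψ : M →ₗ[R] P
  ψ_lift : ∀ y : P, ψ (lift y) = E ^ hh • y
  lift_ψ : ∀ x : M, lift (ψ x) = E ^ hh • x

attribute [instance] GenKisinData.addCommGroupP GenKisinData.moduleP

/-- The submodule of elements killed by some power of `t`. -/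
def upowTorsion (R : Type) [CommRing R] (t : R) (M : Type) [AddCommGroup M] [Module R M] :
    Submodule R M where
  carrier := {x | ∃ l : ℕ, t ^ l • x = 0}
  zero_mem' := ⟨0, smul_zero _⟩
  add_mem' := by
    rintro a b ⟨l, hl⟩ ⟨m, hm⟩
    have h1 : t ^ (l + m) • a = 0 := by rw [add_comm, pow_add, mul_smul, hl, smul_zero]
    have h2 : t ^ (l + m) • b = 0 := by rw [pow_add, mul_smul, hm, smul_zero]
    exact ⟨l + m, by rw [smul_add, h1, h2, add_zero]⟩
  smul_mem' := by
    rintro c x ⟨l, hl⟩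
    exact ⟨l, by rw [smul_comm, hl, smul_zero]⟩


section Hilbert

variable {A : Type} [CommRing A]

def coeffIdeal (I : Ideal (PowerSeries A)) (n : ℕ) : Ideal A where
  carrier := {c | ∃ f ∈ I, (∀ m < n, coeff m f = 0) ∧ coeff n f = c}
  zero_mem' := ⟨0, I.zero_mem, fun _ _ => map_zero _, map_zero _⟩
  add_mem' := by
    rintro a b ⟨f, hf, hof, rfl⟩ ⟨g, hg, hog, rfl⟩
    exact ⟨f + g, I.add_mem hf hg, fun m hm => by simp [hof m hm, hog m hm], by simp⟩
  smul_mem' := by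
    rintro a c ⟨f, hf, hof, rfl⟩
    exact ⟨C a * f, I.mul_mem_left _ hf, fun m hm => by simp [coeff_C_mul, hof m hm], by
      simp [coeff_C_mul]⟩

lemma coeffIdeal_mono (I : Ideal (PowerSeries A)) : Monotone (coeffIdeal I) := by
  refine monotone_nat_of_le_succ fun n c hc => ?_
  obtain ⟨f, hf, hof, rfl⟩ := hc
  refine ⟨X * f, I.mul_mem_left _ hf, fun m hm => ?_, coeff_succ_X_mul n f⟩
  cases m with
  | zero => exact coeff_zero_X_mul f
  | succ m => rw [coeff_succ_X_mul]; exact hof m (by omega)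

theorem powerSeries_isNoetherianRing [IsNoetherianRing A] :
    IsNoetherianRing (PowerSeries A) := by
  classical
  rw [isNoetherianRing_iff_ideal_fg]
  intro I
  obtain ⟨N, hN⟩ := monotone_stabilizes_iff_noetherian.mpr inferInstance
    ⟨coeffIdeal I, coeffIdeal_mono I⟩
  have hfg : ∀ n, (coeffIdeal I n).FG := fun n => IsNoetherian.noetherian _
  choose t ht using hfg
  have hw : ∀ (n : ℕ) (c : A), c ∈ coeffIdeal I n →
      ∃ f ∈ I, (∀ m < n, coeff m f = 0) ∧ coeff n f = c := fun n c h => h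
  choose w hwI hword hwc using hw
  set W : ℕ → A → PowerSeries A :=
    fun n c => if h : c ∈ coeffIdeal I n then w n c h else 0 with hWdef
  have hWI : ∀ n c, W n c ∈ I := by
    intro n c
    by_cases h : c ∈ coeffIdeal I n <;> simp only [hWdef, h, dif_pos, dif_neg, not_false_iff]
    · exact hwI n c h
    · exact I.zero_mem
  have hWord : ∀ n c, ∀ m < n, coeff m (W n c) = 0 := by
    intro n c m hm
    by_cases h : c ∈ coeffIdeal I n <;> simp only [hWdef, h, dif_pos, dif_neg, not_false_iff]
    · exact hword n c h m hm
    · simp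
  have hWc : ∀ n c, c ∈ coeffIdeal I n → coeff n (W n c) = c := by
    intro n c h
    simp only [hWdef, dif_pos h]
    exact hwc n c h
  have htmem : ∀ (n : ℕ) (c : A), c ∈ t n → c ∈ coeffIdeal I n := fun n c hc =>
    (ht n) ▸ Submodule.subset_span hc
  set lvl : ℕ → ℕ := fun m => min m N with hlvl
  have hlvl_le : ∀ m, lvl m ≤ m := fun m => min_le_left _ _
  have hlvl_leN : ∀ m, lvl m ≤ N := fun m => min_le_right _ _
  have hJlvl : ∀ m, coeffIdeal I m = coeffIdeal I (lvl m) := by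
    intro m
    rcases le_or_gt m N with hm | hm
    · simp [hlvl, min_eq_left hm]
    · have h1 := hN m hm.le
      simp only [OrderHom.coe_mk] at h1
      simp [hlvl, min_eq_right hm.le, ← h1]
  set ι := (n : Fin (N + 1)) × {c : A // c ∈ t n.val} with hι
  set g : ι → PowerSeries A := fun i => W i.1.val i.2.1 with hg
  have hgI : ∀ i, g i ∈ I := fun i => hWI _ _
  have hgord : ∀ i : ι, ∀ m < i.1.val, coeff m (g i) = 0 := fun i => hWord _ _
  set S : Finset (PowerSeries A) := Finset.image g Finset.univ with hS
  refine ⟨S, le_antisymm ?_ ?_⟩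
  · rw [Ideal.span_le]
    intro y hy
    simp only [hS, Finset.coe_image, Set.mem_image] at hy
    obtain ⟨i, _, rfl⟩ := hy
    exact hgI i
  · intro f hf
    have step : ∀ (m : ℕ) (f' : PowerSeries A), f' ∈ I → (∀ q < m, coeff q f' = 0) →
        ∃ (a : A → A) (f'' : PowerSeries A), f'' ∈ I ∧ (∀ q < m + 1, coeff q f'' = 0) ∧
          f' = (∑ c ∈ t (lvl m), C (a c) * (X ^ (m - lvl m) * W (lvl m) c)) + f'' := by
      intro m f' hf' hof'
      have hmem : coeff m f' ∈ coeffIdeal I (lvl m) := by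
        rw [← hJlvl]; exact ⟨f', hf', hof', rfl⟩
      have hmem' := hmem
      rw [← ht (lvl m)] at hmem'
      obtain ⟨a, -, ha⟩ := Submodule.mem_span_finset.mp hmem'
      set corr : PowerSeries A :=
        ∑ c ∈ t (lvl m), C (a c) * (X ^ (m - lvl m) * W (lvl m) c) with hcorr
      have hcorrI : corr ∈ I :=
        Submodule.sum_mem _ fun c _ => I.mul_mem_left _ (I.mul_mem_left _ (hWI _ _))
      have hcorrcoeff : ∀ q ≤ m, coeff q corr =
          ∑ c ∈ t (lvl m), a c * (if m - lvl m ≤ q then coeff (q - (m - lvl m)) (W (lvl m) c) else 0) := by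
        intro q _
        rw [hcorr, map_sum]
        exact Finset.sum_congr rfl fun c _ => by rw [coeff_C_mul, coeff_X_pow_mul']
      refine ⟨a, f' - corr, Submodule.sub_mem _ hf' hcorrI, ?_, by ring⟩
      intro q hq
      rw [map_sub, hcorrcoeff q (by omega)]
      rcases Nat.lt_or_ge q m with hqm | hqm
      · rw [hof' q hqm]
        rw [Finset.sum_eq_zero, sub_zero]
        intro c _
        split_ifs with hle
        · rw [hWord (lvl m) c (q - (m - lvl m)) (by have := hlvl_le m; omega), mul_zero]
        · rw [mul_zero]
      · have hqm' : q = m := by omega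
        rw [hqm']
        have : ∀ c ∈ t (lvl m),
            a c * (if m - lvl m ≤ m then coeff (m - (m - lvl m)) (W (lvl m) c) else 0)
              = a c * c := by
          intro c hc
          rw [if_pos (by omega)]
          have h2 : m - (m - lvl m) = lvl m := by have := hlvl_le m; omega
          rw [h2, hWc (lvl m) c (htmem _ _ hc)]
        rw [Finset.sum_congr rfl this]
        have ha' : ∑ c ∈ t (lvl m), a c * c = coeff m f' := by
          simpa [smul_eq_mul] using ha
        rw [ha', sub_self]
    choose a F hFI hFord hFeq using step
    let seq : (m : ℕ) → {f' : PowerSeries A // f' ∈ I ∧ ∀ q < m, coeff q f' = 0} :=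
      fun m => Nat.rec ⟨f, hf, fun q hq => absurd hq (Nat.not_lt_zero q)⟩
        (fun m ih => ⟨F m ih.1 ih.2.1 ih.2.2, hFI m ih.1 ih.2.1 ih.2.2,
          hFord m ih.1 ih.2.1 ih.2.2⟩) m
    have hs0 : (seq 0).1 = f := rfl
    have hssucc : ∀ m, (seq (m + 1)).1 = F m (seq m).1 (seq m).2.1 (seq m).2.2 := fun m => rfl
    let aa : ℕ → ι → A := fun m i =>
      if i.1.val = lvl m then a m (seq m).1 (seq m).2.1 (seq m).2.2 i.2.1 else 0
    have haa_ne : ∀ m i, aa m i ≠ 0 → i.1.val ≤ m := by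
      intro m i h
      by_contra hlt
      apply h
      show (if i.1.val = lvl m then _ else 0) = 0
      rw [if_neg]
      intro heq
      exact hlt (le_trans (le_of_eq heq) (hlvl_le m))
    have hseq : ∀ m, (seq m).1 =
        (∑ i : ι, C (aa m i) * (X ^ (m - i.1.val) * g i)) + (seq (m + 1)).1 := by
      intro m
      have heq := hFeq m (seq m).1 (seq m).2.1 (seq m).2.2
      have hltN : lvl m < N + 1 := by have := hlvl_leN m; omega
      have hsum : (∑ i : ι, C (aa m i) * (X ^ (m - i.1.val) * g i)) =
          ∑ c ∈ t (lvl m), C (a m (seq m).1 (seq m).2.1 (seq m).2.2 c)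
            * (X ^ (m - lvl m) * W (lvl m) c) := by
        rw [← Finset.univ_sigma_univ, Finset.sum_sigma]
        rw [Finset.sum_eq_single (⟨lvl m, hltN⟩ : Fin (N + 1))]
        · have : ∀ c : {c : A // c ∈ t (lvl m)},
              C (aa m ⟨⟨lvl m, hltN⟩, c⟩) * (X ^ (m - lvl m) * g ⟨⟨lvl m, hltN⟩, c⟩)
                = C (a m (seq m).1 (seq m).2.1 (seq m).2.2 c.1)
                    * (X ^ (m - lvl m) * W (lvl m) c.1) := by
            intro c
            have : aa m ⟨⟨lvl m, hltN⟩, c⟩ = a m (seq m).1 (seq m).2.1 (seq m).2.2 c.1 :=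
              if_pos rfl
            rw [this]
          rw [Finset.sum_congr rfl fun c _ => this c]
          exact Finset.sum_coe_sort (t (lvl m))
            (fun c => C (a m (seq m).1 (seq m).2.1 (seq m).2.2 c) * (X ^ (m - lvl m) * W (lvl m) c))
        · intro n _ hn
          apply Finset.sum_eq_zero
          intro c _
          have : aa m ⟨n, c⟩ = 0 := by
            apply if_neg
            intro heq'
            exact hn (Fin.ext heq')
          rw [this, map_zero, zero_mul]
        · intro hmem
          exact absurd (Finset.mem_univ _) hmem
      rw [hsum, hssucc m]
      exact heq
    have hinv : ∀ M : ℕ, f =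
        (∑ i : ι, (∑ m ∈ Finset.range M, C (aa m i) * X ^ (m - i.1.val)) * g i)
          + (seq M).1 := by
      intro M
      induction M with
      | zero => simp [hs0]
      | succ M ihM =>
        rw [ihM, hseq M]
        rw [← add_assoc]
        congr 1
        rw [← Finset.sum_add_distrib]
        apply Finset.sum_congr rfl
        intro i _
        rw [Finset.sum_range_succ, add_mul, mul_assoc]
    have hfinal : f = ∑ i : ι, (mk fun q => aa (q + i.1.val) i) * g i := by
      ext n
      have hI := hinv (n + 1)
      have hz : coeff n (seq (n + 1)).1 = 0 := (seq (n + 1)).2.2 n (by omega)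
      have : coeff n f =
          ∑ i : ι, coeff n ((∑ m ∈ Finset.range (n + 1), C (aa m i) * X ^ (m - i.1.val)) * g i) := by
        rw [hI]
        rw [map_add, map_sum, hz, add_zero]
      rw [this, map_sum]
      apply Finset.sum_congr rfl
      intro i _
      rw [coeff_mul, coeff_mul]
      apply Finset.sum_congr rfl
      rintro ⟨u, v⟩ hx
      rw [Finset.HasAntidiagonal.mem_antidiagonal] at hx
      by_cases hv : coeff v (g i) = 0
      · rw [hv, mul_zero, mul_zero]
      · have hvn : i.1.val ≤ v := by
          by_contra hlt
          exact hv (hgord i v (by omega))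
        have huv : u + i.1.val < n + 1 := by omega
        congr 1
        rw [coeff_mk]
        rw [map_sum]
        rw [Finset.sum_eq_single (u + i.1.val)]
        · rw [coeff_C_mul, coeff_X_pow]
          rw [if_pos (by omega), mul_one]
        · intro m _ hm
          rw [coeff_C_mul, coeff_X_pow]
          by_cases hu : u = m - i.1.val
          · rw [if_pos hu, mul_one]
            by_contra haz
            have h1 : i.1.val ≤ m := haa_ne m i haz
            exact hm (by omega)
          · rw [if_neg hu, mul_zero]
        · intro hmem
          exact absurd (Finset.mem_range.mpr huv) hmem
    rw [hfinal]
    refine Submodule.sum_mem _ fun i _ => Ideal.mul_mem_left _ _ (Ideal.subset_span ?_)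
    simp only [hS, Finset.coe_image, Set.mem_image]
    exact ⟨i, Finset.mem_univ i, rfl⟩

end Hilbert

section BCsec

structure BCData (R : Type) [CommRing R] (φ : R →+* R) (n : ℕ) [NeZero n] where
  b : Fin n → R
  c : Fin n → R → R
  c_add : ∀ (j : Fin n) (r r' : R), c j (r + r') = c j r + c j r'
  b_zero : b 0 = 1
  decomp : ∀ r : R, ∑ i, b i * φ (c i r) = r
  c_mul_phi : ∀ (j : Fin n) (r s : R), c j (r * φ s) = c j r * s
  c_b : ∀ i j : Fin n, c j (b i) = if i = j then 1 else 0

namespace BCData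

variable {R : Type} [CommRing R] {φ : R →+* R} {n : ℕ} [NeZero n] (d : BCData R φ n)

lemma c_zero (j : Fin n) : d.c j 0 = 0 := by
  have := d.c_mul_phi j 1 0
  simpa using this

/-- `c j` as an additive monoid hom. -/
def cHom (j : Fin n) : R →+ R := AddMonoidHom.mk' (d.c j) (d.c_add j)

lemma c_sum {α : Type} (j : Fin n) (s : Finset α) (f : α → R) :
    d.c j (∑ i ∈ s, f i) = ∑ i ∈ s, d.c j (f i) :=
  map_sum (d.cHom j) f s

lemma c_one (j : Fin n) : d.c j 1 = if 0 = j then 1 else 0 := by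
  have := d.c_b 0 j
  rwa [d.b_zero] at this

lemma c_decomp (j : Fin n) (s : Fin n → R) :
    d.c j (∑ i, b d i * φ (s i)) = s j := by
  rw [d.c_sum]
  have : ∀ i : Fin n, d.c j (d.b i * φ (s i)) = (if i = j then 1 else 0) * s i := by
    intro i
    rw [d.c_mul_phi, d.c_b]
  rw [Finset.sum_congr rfl fun i _ => this i]
  simp [Finset.sum_ite_eq]

/-- The underlying type of the concrete base change model. -/
def BC (d : BCData R φ n) (N : Type) : Type := Fin n → N

variable (N : Type) [AddCommGroup N] [Module R N]

instance : AddCommGroup (d.BC N) := inferInstanceAs (AddCommGroup (Fin n → N))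

instance : SMul R (d.BC N) := ⟨fun r m j => ∑ i, d.c j (r * d.b i) • m i⟩

variable {N d}

set_option linter.unusedSectionVars false

lemma smul_def (r : R) (m : d.BC N) (j : Fin n) :
    (r • m) j = ∑ i, d.c j (r * d.b i) • m i := rfl

lemma add_def (m m' : d.BC N) (j : Fin n) : (m + m') j = m j + m' j := rfl

lemma zero_def (j : Fin n) : (0 : d.BC N) j = 0 := rfl

variable (N d)

instance : Module R (d.BC N) := by
  refine Module.ofMinimalAxioms ?_ ?_ ?_ ?_
  · intro r m m'
    funext j
    simp only [smul_def, add_def, smul_add, Finset.sum_add_distrib]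
  · intro r s m
    funext j
    simp only [smul_def, add_def, add_mul, d.c_add, add_smul, Finset.sum_add_distrib]
  · intro r s m
    funext j
    simp only [smul_def]
    have key : ∀ i, d.c j (r * s * d.b i) = ∑ l, d.c j (r * d.b l) * d.c l (s * d.b i) := by
      intro i
      conv_lhs => rw [show r * s * d.b i = r * (s * d.b i) by ring,
        ← d.decomp (s * d.b i)]
      rw [Finset.mul_sum, d.c_sum]
      apply Finset.sum_congr rfl
      intro l _
      rw [show r * (d.b l * φ (d.c l (s * d.b i))) = (r * d.b l) * φ (d.c l (s * d.b i)) by ring,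
        d.c_mul_phi]
    calc ∑ i, d.c j (r * s * d.b i) • m i
        = ∑ i, ∑ l, (d.c j (r * d.b l) * d.c l (s * d.b i)) • m i := by
          apply Finset.sum_congr rfl
          intro i _
          rw [key i, Finset.sum_smul]
      _ = ∑ l, d.c j (r * d.b l) • ∑ i, d.c l (s * d.b i) • m i := by
          rw [Finset.sum_comm]
          apply Finset.sum_congr rfl
          intro l _
          rw [Finset.smul_sum]
          apply Finset.sum_congr rfl
          intro i _
          rw [mul_smul]
  · intro m
    funext j
    simp only [smul_def, one_mul, d.c_b]
    rw [Finset.sum_congr rfl fun i (_ : i ∈ Finset.univ) => by rw [ite_smul, zero_smul]]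
    simpa only [one_smul] using
      (Finset.sum_ite_eq' Finset.univ j (fun x => m x)).trans (if_pos (Finset.mem_univ _))

variable {d N}

/-- evaluation as an additive hom -/
def evalHom (j : Fin n) : d.BC N →+ N where
  toFun := fun m => m j
  map_zero' := rfl
  map_add' := fun _ _ => rfl

lemma sum_def {α : Type} (s : Finset α) (f : α → d.BC N) (j : Fin n) :
    (∑ i ∈ s, f i) j = ∑ i ∈ s, f i j :=
  map_sum (evalHom j) f s

variable (d N)

/-- The canonical semilinear map `N → BC d N`. -/
def ιBC : N →ₛₗ[φ] d.BC N where
  toFun := fun x j => if j = 0 then x else 0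
  map_add' := fun x y => by
    funext j
    show (if j = 0 then x + y else 0) = (if j = 0 then x else 0) + (if j = 0 then y else 0)
    split_ifs <;> simp
  map_smul' := fun s x => by
    funext j
    show (if j = 0 then s • x else 0) = ∑ i, d.c j (φ s * d.b i) • (if i = 0 then x else 0)
    have : ∀ i : Fin n, d.c j (φ s * d.b i) • (if i = 0 then x else 0)
        = if i = 0 then (d.c j (φ s * d.b i)) • x else 0 := by
      intro i; split_ifs <;> simp
    rw [Finset.sum_congr rfl fun i _ => this i]
    rw [Finset.sum_ite_eq' Finset.univ (0 : Fin n)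
      (fun i => (d.c j (φ s * d.b i)) • x), if_pos (Finset.mem_univ _)]
    rw [d.b_zero, mul_one, show φ s = 1 * φ s by ring, d.c_mul_phi, d.c_one]
    by_cases hj : j = 0
    · rw [if_pos hj, if_pos hj.symm, one_mul]
    · rw [if_neg hj, if_neg (fun h => hj h.symm), zero_mul, zero_smul]

variable {d N}

lemma ιBC_apply (x : N) (j : Fin n) : (ιBC d N x) j = if j = 0 then x else 0 := rfl

lemma repr (m : d.BC N) : m = ∑ i, d.b i • (ιBC d N) (m i) := by
  funext j
  rw [sum_def]
  have : ∀ i, (d.b i • (ιBC d N) (m i)) j = if i = j then m i else 0 := by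
    intro i
    rw [smul_def]
    have h2 : ∀ l : Fin n, d.c j (d.b i * d.b l) • ((ιBC d N) (m i)) l
        = if l = 0 then d.c j (d.b i * d.b l) • m i else 0 := by
      intro l
      rw [ιBC_apply]
      split_ifs <;> simp
    rw [Finset.sum_congr rfl fun l _ => h2 l]
    rw [Finset.sum_ite_eq' Finset.univ (0 : Fin n) (fun l => d.c j (d.b i * d.b l) • m i),
      if_pos (Finset.mem_univ _), d.b_zero, mul_one, d.c_b]
    split_ifs <;> simp
  rw [Finset.sum_congr rfl fun i _ => this i]
  exact ((Finset.sum_ite_eq' Finset.univ j (fun i => m i)).trans (if_pos (Finset.mem_univ _))).symm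

variable (d)

/-- The linearization of a semilinear map `g` through the base change. -/
def liftBC {Q : Type} [AddCommGroup Q] [Module R Q] (g : N →ₛₗ[φ] Q) :
    d.BC N →ₗ[R] Q where
  toFun := fun m => ∑ i, d.b i • g (m i)
  map_add' := fun m m' => by
    simp only [add_def, map_add, smul_add, Finset.sum_add_distrib]
  map_smul' := fun r m => by
    simp only [RingHom.id_apply]
    calc ∑ i, d.b i • g ((r • m) i)
        = ∑ j, d.b j • g (∑ i, d.c j (r * d.b i) • m i) := by
          simp only [smul_def]
      _ = ∑ j, ∑ i, (d.b j * φ (d.c j (r * d.b i))) • g (m i) := by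
          apply Finset.sum_congr rfl
          intro j _
          rw [map_sum, Finset.smul_sum]
          apply Finset.sum_congr rfl
          intro i _
          rw [LinearMap.map_smulₛₗ, mul_smul]
      _ = ∑ i, (∑ j, d.b j * φ (d.c j (r * d.b i))) • g (m i) := by
          rw [Finset.sum_comm]
          apply Finset.sum_congr rfl
          intro i _
          rw [Finset.sum_smul]
      _ = ∑ i, (r * d.b i) • g (m i) := by
          apply Finset.sum_congr rfl
          intro i _
          rw [d.decomp]
      _ = r • ∑ i, d.b i • g (m i) := by
          rw [Finset.smul_sum]
          apply Finset.sum_congr rfl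
          intro i _
          rw [mul_smul]

variable {d}

lemma liftBC_ι {Q : Type} [AddCommGroup Q] [Module R Q] (g : N →ₛₗ[φ] Q) (x : N) :
    d.liftBC g (ιBC d N x) = g x := by
  show ∑ i, d.b i • g ((ιBC d N x) i) = g x
  have : ∀ i : Fin n, d.b i • g ((ιBC d N x) i) = if i = 0 then d.b i • g x else 0 := by
    intro i
    rw [ιBC_apply]
    split_ifs <;> simp
  rw [Finset.sum_congr rfl fun i _ => this i]
  rw [Finset.sum_ite_eq' Finset.univ (0 : Fin n) (fun i => d.b i • g x),
    if_pos (Finset.mem_univ _), d.b_zero, one_smul]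

theorem isBC : IsSemilinearBaseChange φ (ιBC d N) := by
  intro Q _ _ g
  refine ⟨d.liftBC g, fun x => liftBC_ι g x, ?_⟩
  intro h hh
  apply LinearMap.ext
  intro m
  conv_lhs => rw [repr m]
  rw [map_sum]
  show ∑ i, h (d.b i • (ιBC d N) (m i)) = d.liftBC g m
  have : ∀ i : Fin n, h (d.b i • (ιBC d N) (m i)) = d.b i • g (m i) := by
    intro i
    rw [map_smul, hh]
  rw [Finset.sum_congr rfl fun i _ => this i]
  rfl

variable (d)

/-- Componentwise application of a linear map. -/
def mapBC {N' : Type} [AddCommGroup N'] [Module R N'] (f : N →ₗ[R] N') :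
    d.BC N →ₗ[R] d.BC N' where
  toFun := fun m j => f (m j)
  map_add' := fun m m' => by funext j; simp [add_def]; rfl
  map_smul' := fun r m => by
    funext j
    show f ((r • m) j) = _
    show f (∑ i, d.c j (r * d.b i) • m i) = ∑ i, d.c j (r * d.b i) • f (m i)
    rw [map_sum]
    exact Finset.sum_congr rfl fun i _ => (map_smul f _ _).symm ▸ rfl

variable {d}

lemma mapBC_apply {N' : Type} [AddCommGroup N'] [Module R N'] (f : N →ₗ[R] N')
    (m : d.BC N) (j : Fin n) : (d.mapBC f m) j = f (m j) := rfl

lemma mapBC_ι {N' : Type} [AddCommGroup N'] [Module R N'] (f : N →ₗ[R] N') (x : N) :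
    d.mapBC f (ιBC d N x) = ιBC d N' (f x) := by
  funext j
  rw [mapBC_apply, ιBC_apply, ιBC_apply]
  split_ifs <;> simp

lemma mapBC_injective {N' : Type} [AddCommGroup N'] [Module R N'] (f : N →ₗ[R] N')
    (hf : Function.Injective f) : Function.Injective (d.mapBC f) := by
  intro m m' h
  funext j
  exact hf (congrFun h j)

lemma smul_phi_apply (s : R) (m : d.BC N) (j : Fin n) : (φ s • m) j = s • m j := by
  rw [smul_def]
  have : ∀ i : Fin n, d.c j (φ s * d.b i) • m i = if i = j then s • m i else 0 := by
    intro i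
    rw [show φ s * d.b i = d.b i * φ s by ring, d.c_mul_phi, d.c_b]
    split_ifs <;> simp
  rw [Finset.sum_congr rfl fun i _ => this i]
  simp [Finset.sum_ite_eq']

/-- Restrict a `BC`-valued linear map to a submodule componentwise. -/
def codRestrictBC {N' : Type} [AddCommGroup N'] [Module R N'] (q : Submodule R N)
    (f : N' →ₗ[R] d.BC N) (hf : ∀ x j, f x j ∈ q) : N' →ₗ[R] d.BC (↥q) where
  toFun := fun x j => ⟨f x j, hf x j⟩
  map_add' := fun x y => by
    funext j
    apply Subtype.ext
    show f (x + y) j = f x j + f y j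
    rw [map_add]
    rfl
  map_smul' := fun r x => by
    funext j
    apply Subtype.ext
    show f (r • x) j = ((∑ i, d.c j (r * d.b i) • (fun j' => (⟨f x j', hf x j'⟩ : ↥q)) i : ↥q) : N)
    rw [map_smul]
    rw [show (((∑ i, d.c j (r * d.b i) • (fun j' => (⟨f x j', hf x j'⟩ : ↥q)) i : ↥q)) : N)
      = ∑ i, ((d.c j (r * d.b i) • (fun j' => (⟨f x j', hf x j'⟩ : ↥q)) i : ↥q) : N) from
      map_sum q.subtype _ _]
    rw [BCData.smul_def]
    exact Finset.sum_congr rfl fun i _ => rfl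

lemma codRestrictBC_apply {N' : Type} [AddCommGroup N'] [Module R N'] (q : Submodule R N)
    (f : N' →ₗ[R] d.BC N) (hf : ∀ x j, f x j ∈ q) (x : N') (j : Fin n) :
    (d.codRestrictBC q f hf x j : N) = f x j := rfl

theorem mem_upowTorsion_iff (t : R) (hφt : ∀ l : ℕ, ∃ l', l ≤ l' ∧ φ (t ^ l) = t ^ l')
    (m : d.BC N) :
    m ∈ upowTorsion R t (d.BC N) ↔ ∀ j, m j ∈ upowTorsion R t N := by
  constructor
  · rintro ⟨l, hl⟩ j
    obtain ⟨l', hle, heq⟩ := hφt l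
    refine ⟨l, ?_⟩
    have h1 : φ (t ^ l) • m = 0 := by
      rw [heq, show l' = (l' - l) + l by omega, pow_add, mul_smul, hl, smul_zero]
    have h2 := congrFun h1 j
    rw [smul_phi_apply] at h2
    exact h2
  · intro hj
    choose l hl using hj
    set L := Finset.univ.sup l with hL
    have hLl : ∀ j, t ^ L • m j = 0 := by
      intro j
      have : l j ≤ L := Finset.le_sup (Finset.mem_univ j)
      rw [show L = (L - l j) + l j by omega, pow_add, mul_smul, hl, smul_zero]
    obtain ⟨l', _, heq⟩ := hφt L
    refine ⟨l', ?_⟩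
    funext j
    rw [← heq]
    rw [show ((φ (t ^ L) • m) j : N) = t ^ L • m j from smul_phi_apply _ _ _, hLl]
    rfl

end BCData
end BCsec

section Witt

open PowerSeries Finset

variable (p : ℕ) [Fact p.Prime] (k : Type) [Field k] [CharP k p] [PerfectRing k p]
variable (φ : PowerSeries (WittVector p k) →+* PowerSeries (WittVector p k))
    (hφ : ∀ (F : PowerSeries (WittVector p k)) (n : ℕ),
      PowerSeries.coeff n (φ F) =
        if p ∣ n then
          (WittVector.frobeniusEquiv p k) (PowerSeries.coeff (n / p) F)
        else 0)

include hφ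

theorem phi_X_pow (l : ℕ) : φ ((X : PowerSeries (WittVector p k)) ^ l) = X ^ (p * l) := by
  have hp : 0 < p := (Fact.out : p.Prime).pos
  apply PowerSeries.ext
  intro nn
  rw [hφ]
  conv_rhs => rw [coeff_X_pow]
  by_cases hd : p ∣ nn
  · obtain ⟨v, rfl⟩ := hd
    rw [if_pos ⟨v, rfl⟩, coeff_X_pow, Nat.mul_div_cancel_left v hp]
    by_cases hv : v = l
    · subst hv
      rw [if_pos rfl, if_pos rfl, map_one]
    · rw [if_neg hv, if_neg (fun hc => hv (Nat.eq_of_mul_eq_mul_left hp hc)), map_zero]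
  · rw [if_neg hd, if_neg (fun hc : nn = p * l => hd (hc ▸ ⟨l, rfl⟩))]

/-- The concrete base-change data for `W⟦u⟧` along `φ`. -/
noncomputable def wittBCData : BCData (PowerSeries (WittVector p k)) φ p where
  b := fun i => X ^ (i : ℕ)
  c := fun j F => PowerSeries.mk fun m =>
    (WittVector.frobeniusEquiv p k).symm (coeff (p * m + (j : ℕ)) F)
  c_add := by
    intro j r r'
    apply PowerSeries.ext
    intro m
    simp [coeff_mk]
  b_zero := by simp
  c_b := by
    intro i j
    have hp : 0 < p := (Fact.out : p.Prime).pos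
    apply PowerSeries.ext
    intro m
    rw [coeff_mk, coeff_X_pow]
    by_cases hij : i = j
    · subst hij
      rw [if_pos rfl]
      by_cases hm : m = 0
      · subst hm
        rw [if_pos (by omega), map_one, coeff_one, if_pos rfl]
      · have hI := i.isLt
        have hmul : p * 1 ≤ p * m := Nat.mul_le_mul_left p (by omega)
        rw [if_neg (by omega), map_zero, coeff_one, if_neg hm]
    · have hcond : ¬ (p * m + (j : ℕ) = (i : ℕ)) := by
        rcases Nat.eq_zero_or_pos m with rfl | hm
        · intro heq
          simp only [Nat.mul_zero, Nat.zero_add] at heq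
          exact hij (Fin.val_injective heq.symm)
        · have h1 := i.isLt
          have h2 : p * 1 ≤ p * m := Nat.mul_le_mul_left p (by omega)
          omega
      rw [if_neg hcond, map_zero, if_neg hij, map_zero]
  decomp := by
    intro r
    have hp : 0 < p := (Fact.out : p.Prime).pos
    apply PowerSeries.ext
    intro nn
    rw [map_sum]
    have hterm : ∀ i : Fin p, coeff nn
        ((X : PowerSeries (WittVector p k)) ^ (i : ℕ) * φ (PowerSeries.mk fun m =>
          (WittVector.frobeniusEquiv p k).symm (coeff (p * m + (i : ℕ)) r))) =
        if (i : ℕ) ≤ nn ∧ p ∣ (nn - (i : ℕ)) then coeff nn r else 0 := by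
      intro i
      rw [coeff_X_pow_mul']
      by_cases hle : (i : ℕ) ≤ nn
      · rw [if_pos hle, hφ]
        by_cases hdvd : p ∣ nn - (i : ℕ)
        · rw [if_pos hdvd, coeff_mk, RingEquiv.apply_symm_apply, if_pos ⟨hle, hdvd⟩]
          obtain ⟨q, hq⟩ := hdvd
          have hidx : p * ((nn - (i : ℕ)) / p) + (i : ℕ) = nn := by
            rw [hq, Nat.mul_div_cancel_left q hp, ← hq]
            exact Nat.sub_add_cancel hle
          rw [hidx]
        · rw [if_neg hdvd, if_neg (by tauto)]
      · rw [if_neg hle, if_neg (by tauto)]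
    rw [Finset.sum_congr rfl fun i _ => hterm i]
    rw [Finset.sum_eq_single (⟨nn % p, Nat.mod_lt nn hp⟩ : Fin p)]
    · have hval : ((⟨nn % p, Nat.mod_lt nn hp⟩ : Fin p) : ℕ) = nn % p := rfl
      rw [hval]
      refine if_pos ⟨Nat.mod_le nn p, ⟨nn / p, ?_⟩⟩
      have := Nat.mod_add_div nn p
      omega
    · intro i _ hi
      rw [if_neg]
      rintro ⟨hle, q, hq⟩
      apply hi
      apply Fin.ext
      show (i : ℕ) = nn % p
      have hnn : nn = p * q + (i : ℕ) := by
        rw [← hq]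
        omega
      rw [hnn, Nat.mul_add_mod, Nat.mod_eq_of_lt i.isLt]
    · intro h
      exact absurd (Finset.mem_univ _) h
  c_mul_phi := by
    intro j r s
    have hp : 0 < p := (Fact.out : p.Prime).pos
    have hjp := j.isLt
    set σ := WittVector.frobeniusEquiv p k with hσ
    set e : ℕ × ℕ → ℕ × ℕ := fun x => (p * x.1 + (j : ℕ), p * x.2) with he
    apply PowerSeries.ext
    intro m
    beta_reduce
    rw [coeff_mk]
    apply σ.injective
    rw [RingEquiv.apply_symm_apply]
    have hrhs : σ (coeff m ((PowerSeries.mk fun m' =>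
        σ.symm (coeff (p * m' + (j : ℕ)) r)) * s)) =
        ∑ x ∈ Finset.HasAntidiagonal.antidiagonal m,
          coeff (p * x.1 + (j : ℕ)) r * coeff (p * x.2) (φ s) := by
      rw [coeff_mul, map_sum]
      apply Finset.sum_congr rfl
      intro x _
      rw [coeff_mk, map_mul, RingEquiv.apply_symm_apply, hφ, if_pos ⟨x.2, rfl⟩,
        Nat.mul_div_cancel_left _ hp]
    rw [hrhs]
    clear hrhs
    have hinj : ∀ x ∈ Finset.HasAntidiagonal.antidiagonal m, ∀ y ∈ Finset.HasAntidiagonal.antidiagonal m,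
        e x = e y → x = y := by
      intro x _ y _ hxy
      simp only [he, Prod.mk.injEq] at hxy
      have h2 : x.2 = y.2 := Nat.eq_of_mul_eq_mul_left hp hxy.2
      have h1' : p * x.1 = p * y.1 := by omega
      have h1 : x.1 = y.1 := Nat.eq_of_mul_eq_mul_left hp h1'
      exact Prod.ext h1 h2
    have hsub : (Finset.HasAntidiagonal.antidiagonal m).image e ⊆ Finset.HasAntidiagonal.antidiagonal (p * m + (j : ℕ)) := by
      intro y hy
      rw [Finset.mem_image] at hy
      obtain ⟨x, hx, rfl⟩ := hy
      rw [Finset.HasAntidiagonal.mem_antidiagonal] at hx ⊢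
      show p * x.1 + (j : ℕ) + p * x.2 = p * m + (j : ℕ)
      rw [← hx]
      ring
    have hvan : ∀ y ∈ Finset.HasAntidiagonal.antidiagonal (p * m + (j : ℕ)),
        y ∉ (Finset.HasAntidiagonal.antidiagonal m).image e →
        coeff y.1 r * coeff y.2 (φ s) = 0 := by
      intro y hy hyim
      rw [Finset.HasAntidiagonal.mem_antidiagonal] at hy
      by_cases hd : p ∣ y.2
      · exfalso
        obtain ⟨v, hv⟩ := hd
        have hvm : v ≤ m := by
          by_contra hvm
          have h3 : p * (m + 1) ≤ p * v := Nat.mul_le_mul_left p (by omega)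
          have h4 : p * (m + 1) = p * m + p := by ring
          omega
        have hw : v + (m - v) = m := by omega
        have hpm : p * v + p * (m - v) = p * m := by rw [← Nat.mul_add, hw]
        have hy1 : y.1 = p * (m - v) + (j : ℕ) := by omega
        apply hyim
        rw [Finset.mem_image]
        refine ⟨(m - v, v), Finset.HasAntidiagonal.mem_antidiagonal.mpr (by omega), ?_⟩
        show (p * (m - v) + (j : ℕ), p * v) = y
        rw [← hy1, ← hv]
      · rw [hφ, if_neg hd, mul_zero]
    calc coeff (p * m + (j : ℕ)) (r * φ s)
        = ∑ y ∈ Finset.HasAntidiagonal.antidiagonal (p * m + (j : ℕ)),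
            coeff y.1 r * coeff y.2 (φ s) := coeff_mul _ _ _
      _ = ∑ y ∈ (Finset.HasAntidiagonal.antidiagonal m).image e,
            coeff y.1 r * coeff y.2 (φ s) :=
          (Finset.sum_subset hsub hvan).symm
      _ = ∑ x ∈ Finset.HasAntidiagonal.antidiagonal m,
            coeff (p * x.1 + (j : ℕ)) r * coeff (p * x.2) (φ s) :=
          Finset.sum_image hinj

end Witt

set_option maxHeartbeats 2000000 in
/-- **Lemma 6.3**: for a generalized Kisin module `𝔐` of height `h`, the `u`-power-torsion
submodule `T = 𝔐[u^∞]` is stable under `φ_𝔐`; `ψ` sends `T` into the canonical image of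
`φ*T` in `φ*𝔐`, which is the `u`-power-torsion submodule of `φ*𝔐`; with the restricted
maps `T` is a generalized Kisin module of height `h`; and with the induced maps the
quotient `𝔐/T` is a generalized Kisin module of height `h` with no `u`-torsion.  Thus
`0 → 𝔐[u^∞] → 𝔐 → 𝔐/𝔐[u^∞] → 0` is a short exact sequence of generalized Kisin
modules of height `h` with étale quotient. -/
theorem stmt_6
    (p : ℕ) [Fact p.Prime] (k : Type) [Field k] [CharP k p] [PerfectRing k p]
    (e : ℕ) (he : 1 ≤ e)
    (φ : PowerSeries (WittVector p k) →+* PowerSeries (WittVector p k))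
    (hφ : ∀ (F : PowerSeries (WittVector p k)) (n : ℕ),
      PowerSeries.coeff n (φ F) =
        if p ∣ n then
          (WittVector.frobeniusEquiv p k) (PowerSeries.coeff (n / p) F)
        else 0)
    (E : Polynomial (WittVector p k)) (hEmonic : E.Monic) (hEdeg : E.natDegree = e)
    (hEcoeff : ∀ i < e, (p : WittVector p k) ∣ E.coeff i)
    (hEconst : ¬ (p : WittVector p k) ^ 2 ∣ E.coeff 0)
    (h : ℕ)
    (M : Type) [AddCommGroup M] [Module (PowerSeries (WittVector p k)) M]
    [Module.Finite (PowerSeries (WittVector p k)) M]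
    (D : GenKisinData φ (E : PowerSeries (WittVector p k)) h M) :
    (∀ x ∈ upowTorsion (PowerSeries (WittVector p k)) PowerSeries.X M,
        D.phiM x ∈ upowTorsion (PowerSeries (WittVector p k)) PowerSeries.X M) ∧
    Module.Finite (PowerSeries (WittVector p k))
        (upowTorsion (PowerSeries (WittVector p k)) PowerSeries.X M) ∧
    Module.Finite (PowerSeries (WittVector p k))
        (M ⧸ upowTorsion (PowerSeries (WittVector p k)) PowerSeries.X M) ∧
    (∃ DT : GenKisinData φ (E : PowerSeries (WittVector p k)) h
        (upowTorsion (PowerSeries (WittVector p k)) PowerSeries.X M),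
      (∀ x : upowTorsion (PowerSeries (WittVector p k)) PowerSeries.X M,
        (DT.phiM x : M) = D.phiM (x : M)) ∧
      ∃ j : DT.P →ₗ[PowerSeries (WittVector p k)] D.P,
        (∀ x : upowTorsion (PowerSeries (WittVector p k)) PowerSeries.X M,
          j (DT.ι x) = D.ι (x : M)) ∧
        LinearMap.range j = upowTorsion (PowerSeries (WittVector p k)) PowerSeries.X D.P ∧
        (∀ x : upowTorsion (PowerSeries (WittVector p k)) PowerSeries.X M,
          j (DT.ψ x) = D.ψ (x : M)) ∧
        (∀ x : upowTorsion (PowerSeries (WittVector p k)) PowerSeries.X M,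
          D.ψ (x : M) ∈ LinearMap.range j)) ∧
    (∃ DQ : GenKisinData φ (E : PowerSeries (WittVector p k)) h
        (M ⧸ upowTorsion (PowerSeries (WittVector p k)) PowerSeries.X M),
      (∀ y : M, DQ.phiM (Submodule.Quotient.mk y) = Submodule.Quotient.mk (D.phiM y)) ∧
      (∃ π : D.P →ₗ[PowerSeries (WittVector p k)] DQ.P,
        (∀ y : M, π (D.ι y) = DQ.ι (Submodule.Quotient.mk y)) ∧
        (∀ y : M, DQ.ψ (Submodule.Quotient.mk y) = π (D.ψ y))) ∧
      (∀ z : M ⧸ upowTorsion (PowerSeries (WittVector p k)) PowerSeries.X M,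
        (PowerSeries.X : PowerSeries (WittVector p k)) • z = 0 → z = 0)) := by
  classical
  have hp : 0 < p := (Fact.out : p.Prime).pos
  revert D
  set R := PowerSeries (WittVector p k) with hR
  set T := upowTorsion R PowerSeries.X M with hT
  set EE : R := (E : PowerSeries (WittVector p k)) with hEE
  intro D
  have hφX : ∀ l : ℕ, φ ((X : R) ^ l) = X ^ (p * l) := phi_X_pow p k φ hφ
  -- torsion is φ-stable
  have htorphi : ∀ x : M, x ∈ T → D.phiM x ∈ T := by
    rintro x ⟨l, hl⟩
    refine ⟨p * l, ?_⟩
    calc (X : R) ^ (p * l) • D.phiM x = φ ((X : R) ^ l) • D.phiM x := by rw [hφX]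
      _ = D.phiM ((X : R) ^ l • x) := (D.phiM.map_smulₛₗ _ _).symm
      _ = 0 := by rw [hl, map_zero]
  -- noetherian facts
  haveI : IsDomain (WittVector p k) := by infer_instance
  haveI : IsDiscreteValuationRing (WittVector p k) :=
    (WittVector.isDiscreteValuationRing : IsDiscreteValuationRing (WittVector p k))
  haveI : IsNoetherianRing (WittVector p k) := PrincipalIdealRing.isNoetherianRing
  haveI : IsNoetherianRing R := powerSeries_isNoetherianRing
  haveI : IsNoetherian R M := isNoetherian_of_isNoetherianRing_of_finite R M
  have hfinT : Module.Finite R T := Module.Finite.iff_fg.mpr (IsNoetherian.noetherian T)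
  have hfinQ : Module.Finite R (M ⧸ T) :=
    Module.Finite.of_surjective (T.mkQ) T.mkQ_surjective
  -- base change data
  let d : BCData R φ p := wittBCData p k φ hφ
  have hφt : ∀ l : ℕ, ∃ l', l ≤ l' ∧ φ ((X : R) ^ l) = X ^ l' :=
    fun l => ⟨p * l, Nat.le_mul_of_pos_left l hp, hφX l⟩
  -- the comparison iso θ : d.BC M ≃ D.P
  obtain ⟨θf, hθf, hθfu⟩ := (BCData.isBC (d := d) (N := M)) D.P D.ι
  obtain ⟨θg, hθg, hθgu⟩ := D.isBaseChange (d.BC M) (BCData.ιBC d M)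
  have hfg : θf.comp θg = LinearMap.id := by
    obtain ⟨u, hu, huu⟩ := D.isBaseChange D.P D.ι
    have h1 : ∀ x, (θf.comp θg) (D.ι x) = D.ι x := by
      intro x
      show θf (θg (D.ι x)) = D.ι x
      rw [hθg, hθf]
    have h2 : ∀ x, (LinearMap.id : D.P →ₗ[R] D.P) (D.ι x) = D.ι x := fun x => rfl
    rw [huu _ h1, huu _ h2]
  have hgf : θg.comp θf = LinearMap.id := by
    obtain ⟨u, hu, huu⟩ := (BCData.isBC (d := d) (N := M)) (d.BC M) (BCData.ιBC d M)
    have h1 : ∀ x, (θg.comp θf) (BCData.ιBC d M x) = BCData.ιBC d M x := by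
      intro x
      show θg (θf (BCData.ιBC d M x)) = BCData.ιBC d M x
      rw [hθf, hθg]
    have h2 : ∀ x, (LinearMap.id : d.BC M →ₗ[R] d.BC M) (BCData.ιBC d M x)
        = BCData.ιBC d M x := fun x => rfl
    rw [huu _ h1, huu _ h2]
  let θ : d.BC M ≃ₗ[R] D.P := LinearEquiv.ofLinear θf θg hfg hgf
  have hθι : ∀ x : M, θ (BCData.ιBC d M x) = D.ι x := hθf
  have hθsymmι : ∀ x : M, θ.symm (D.ι x) = BCData.ιBC d M x := hθg
  -- key lift computation
  have L1 : ∀ w : d.BC M, D.lift (θ w) = ∑ i, d.b i • D.phiM (w i) := by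
    intro w
    conv_lhs => rw [BCData.repr w]
    have hsum : θ (∑ i, d.b i • (BCData.ιBC d M) (w i)) = ∑ i, d.b i • D.ι (w i) := by
      rw [map_sum]
      exact Finset.sum_congr rfl fun i _ => by rw [map_smul, hθι]
    rw [hsum, map_sum]
    exact Finset.sum_congr rfl fun i _ => by rw [map_smul, D.lift_ι]
  -- ψ sends torsion into torsion componentwise
  have hψtor : ∀ x : M, x ∈ T → ∀ j, (θ.symm (D.ψ x)) j ∈ T := by
    rintro x ⟨l, hl⟩
    have h1 : (X : R) ^ l • θ.symm (D.ψ x) = 0 := by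
      rw [← map_smul, ← map_smul, hl, map_zero, map_zero]
    exact (BCData.mem_upowTorsion_iff X hφt _).mp ⟨l, h1⟩
  -- torsion submodule as a Kisin module
  let phiT : T →ₛₗ[φ] T :=
    { toFun := fun x => ⟨D.phiM x, htorphi x x.2⟩
      map_add' := fun x y => Subtype.ext (by
        show D.phiM ((x : M) + (y : M)) = D.phiM x + D.phiM y
        rw [map_add])
      map_smul' := fun s x => Subtype.ext (by
        show D.phiM (s • (x : M)) = φ s • D.phiM x
        exact D.phiM.map_smulₛₗ s x) }
  let incl : d.BC T →ₗ[R] d.BC M := BCData.mapBC d T.subtype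
  have hincl_inj : Function.Injective incl :=
    BCData.mapBC_injective T.subtype Subtype.coe_injective
  have hcoesum : ∀ (s : Finset (Fin p)) (f : Fin p → T),
      ((∑ i ∈ s, f i : T) : M) = ∑ i ∈ s, ((f i : M)) := fun s f => map_sum T.subtype f s
  have hliftT : ∀ y : d.BC T, ((BCData.liftBC d phiT y : T) : M) = D.lift (θ (incl y)) := by
    intro y
    have h1 : ((BCData.liftBC d phiT y : T) : M) = ∑ i, d.b i • D.phiM ((y i : M)) := by
      show ((∑ i, d.b i • phiT (y i) : T) : M) = _
      rw [hcoesum]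
      exact Finset.sum_congr rfl fun i _ => rfl
    rw [h1, L1 (incl y)]
    rfl
  let ψT : T →ₗ[R] d.BC T :=
    d.codRestrictBC T ((θ.symm.toLinearMap.comp D.ψ).comp T.subtype)
      (fun x j => hψtor (x : M) x.2 j)
  have hinclψT : ∀ x : T, incl (ψT x) = θ.symm (D.ψ (x : M)) := fun x => rfl
  have hψ_liftT : ∀ y : d.BC T,
      ψT (BCData.liftBC d phiT y) = EE ^ h • y := by
    intro y
    apply hincl_inj
    rw [hinclψT, map_smul, hliftT y, D.ψ_lift, map_smul, LinearEquiv.symm_apply_apply]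
  have hlift_ψT : ∀ x : T, BCData.liftBC d phiT (ψT x) = EE ^ h • x := by
    intro x
    apply Subtype.ext
    show ((BCData.liftBC d phiT (ψT x) : T) : M) = ((EE ^ h • x : T) : M)
    rw [hliftT, hinclψT, LinearEquiv.apply_symm_apply, D.lift_ψ]
    rfl
  let DT : GenKisinData φ EE h T :=
    { phiM := phiT
      P := d.BC T
      ι := BCData.ιBC d T
      isBaseChange := BCData.isBC
      lift := BCData.liftBC d phiT
      lift_ι := fun x => BCData.liftBC_ι phiT x
      ψ := ψT
      ψ_lift := hψ_liftT
      lift_ψ := hlift_ψT }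
  -- the embedding j : DT.P → D.P
  let jmap : d.BC T →ₗ[R] D.P := θ.toLinearMap.comp incl
  have hjι : ∀ x : T, jmap (BCData.ιBC d T x) = D.ι (x : M) := by
    intro x
    show θ (incl (BCData.ιBC d T x)) = D.ι (x : M)
    rw [show incl (BCData.ιBC d T x) = BCData.ιBC d M (T.subtype x) from
      BCData.mapBC_ι T.subtype x, hθι]
    rfl
  have hjrange : LinearMap.range jmap = upowTorsion R PowerSeries.X D.P := by
    apply le_antisymm
    · rintro z ⟨y, rfl⟩
      have hy : incl y ∈ upowTorsion R PowerSeries.X (d.BC M) := by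
        rw [BCData.mem_upowTorsion_iff X hφt]
        intro j
        exact (y j).2
      obtain ⟨l, hl⟩ := hy
      exact ⟨l, by show (X : R) ^ l • θ (incl y) = 0; rw [← map_smul, hl, map_zero]⟩
    · rintro z ⟨l, hl⟩
      have hz : θ.symm z ∈ upowTorsion R PowerSeries.X (d.BC M) :=
        ⟨l, by rw [← map_smul, hl, map_zero]⟩
      have hcomp := (BCData.mem_upowTorsion_iff X hφt _).mp hz
      refine ⟨fun j => ⟨(θ.symm z) j, hcomp j⟩, ?_⟩
      show θ (incl fun j => (⟨(θ.symm z) j, hcomp j⟩ : T)) = z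
      have : (incl fun j => (⟨(θ.symm z) j, hcomp j⟩ : T)) = θ.symm z := funext fun j => rfl
      rw [this, LinearEquiv.apply_symm_apply]
  have hjψ : ∀ x : T, jmap (ψT x) = D.ψ (x : M) := by
    intro x
    show θ (incl (ψT x)) = D.ψ (x : M)
    rw [hinclψT, LinearEquiv.apply_symm_apply]
  -- quotient as a Kisin module
  have hkerphi : T ≤ LinearMap.ker (T.mkQ.comp D.phiM) := by
    intro x hx
    rw [LinearMap.mem_ker, LinearMap.comp_apply, Submodule.mkQ_apply,
      Submodule.Quotient.mk_eq_zero]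
    exact htorphi x hx
  let phiQ : (M ⧸ T) →ₛₗ[φ] (M ⧸ T) := T.liftQ (T.mkQ.comp D.phiM) hkerphi
  have hphiQmk : ∀ y : M, phiQ (Submodule.Quotient.mk y)
      = Submodule.Quotient.mk (D.phiM y) := fun y => rfl
  let ψ'Q : M →ₗ[R] d.BC (M ⧸ T) :=
    (BCData.mapBC d T.mkQ).comp (θ.symm.toLinearMap.comp D.ψ)
  have hkerψ : T ≤ LinearMap.ker ψ'Q := by
    intro x hx
    rw [LinearMap.mem_ker]
    funext j
    show T.mkQ ((θ.symm (D.ψ x)) j) = 0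
    rw [Submodule.mkQ_apply, Submodule.Quotient.mk_eq_zero]
    exact hψtor x hx j
  let ψQ : (M ⧸ T) →ₗ[R] d.BC (M ⧸ T) := T.liftQ ψ'Q hkerψ
  have hψQmk : ∀ x : M, ψQ (Submodule.Quotient.mk x)
      = BCData.mapBC d T.mkQ (θ.symm (D.ψ x)) := fun x => rfl
  have hliftQmk : ∀ w : d.BC M,
      BCData.liftBC d phiQ (BCData.mapBC d T.mkQ w) = T.mkQ (D.lift (θ w)) := by
    intro w
    show ∑ i, d.b i • phiQ ((BCData.mapBC d T.mkQ w) i) = _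
    have h1 : ∀ i : Fin p, d.b i • phiQ ((BCData.mapBC d T.mkQ w) i)
        = T.mkQ (d.b i • D.phiM (w i)) := by
      intro i
      show d.b i • phiQ (T.mkQ (w i)) = _
      rw [Submodule.mkQ_apply, hphiQmk, map_smul, Submodule.mkQ_apply]
    rw [Finset.sum_congr rfl fun i _ => h1 i, ← map_sum, L1 w]
  have hlift_ψQ : ∀ z : M ⧸ T,
      BCData.liftBC d phiQ (ψQ z) = EE ^ h • z := by
    intro z
    obtain ⟨x, rfl⟩ := Submodule.Quotient.mk_surjective T z
    rw [hψQmk, hliftQmk, LinearEquiv.apply_symm_apply, D.lift_ψ]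
    rw [← Submodule.mkQ_apply, map_smul, Submodule.mkQ_apply]
  have hψ_liftQ : ∀ y : d.BC (M ⧸ T),
      ψQ (BCData.liftBC d phiQ y) = EE ^ h • y := by
    have hgen : ∀ z : M ⧸ T,
        ψQ (BCData.liftBC d phiQ (BCData.ιBC d (M ⧸ T) z))
          = EE ^ h • BCData.ιBC d (M ⧸ T) z := by
      intro z
      obtain ⟨x, rfl⟩ := Submodule.Quotient.mk_surjective T z
      rw [BCData.liftBC_ι, hphiQmk, hψQmk]
      have h2 : D.ψ (D.phiM x) = EE ^ h • D.ι x := by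
        rw [← D.lift_ι x, D.ψ_lift]
      rw [h2, map_smul, hθsymmι, map_smul, BCData.mapBC_ι]
      rfl
    intro y
    conv_lhs => rw [BCData.repr y]
    conv_rhs => rw [BCData.repr y]
    rw [map_sum, map_sum, Finset.smul_sum]
    apply Finset.sum_congr rfl
    intro i _
    rw [map_smul, map_smul, hgen, smul_comm]
  let DQ : GenKisinData φ EE h (M ⧸ T) :=
    { phiM := phiQ
      P := d.BC (M ⧸ T)
      ι := BCData.ιBC d (M ⧸ T)
      isBaseChange := BCData.isBC
      lift := BCData.liftBC d phiQ
      lift_ι := fun x => BCData.liftBC_ι phiQ x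
      ψ := ψQ
      ψ_lift := hψ_liftQ
      lift_ψ := hlift_ψQ }
  let π : D.P →ₗ[R] d.BC (M ⧸ T) := (BCData.mapBC d T.mkQ).comp θ.symm.toLinearMap
  have hπι : ∀ y : M, π (D.ι y) = BCData.ιBC d (M ⧸ T) (Submodule.Quotient.mk y) := by
    intro y
    show BCData.mapBC d T.mkQ (θ.symm (D.ι y)) = _
    rw [hθsymmι, BCData.mapBC_ι]
    rfl
  have hψπ : ∀ y : M, ψQ (Submodule.Quotient.mk y) = π (D.ψ y) := fun y => rfl
  have notors : ∀ z : M ⧸ T, (PowerSeries.X : R) • z = 0 → z = 0 := by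
    intro z hz
    obtain ⟨x, rfl⟩ := Submodule.Quotient.mk_surjective T z
    rw [← Submodule.Quotient.mk_smul, Submodule.Quotient.mk_eq_zero] at hz
    obtain ⟨l, hl⟩ := hz
    rw [Submodule.Quotient.mk_eq_zero]
    refine ⟨l + 1, ?_⟩
    rw [pow_succ, mul_smul, hl]
  exact ⟨htorphi, hfinT, hfinQ,
    ⟨DT, fun x => rfl, jmap, hjι, hjrange, hjψ, fun x => ⟨ψT x, hjψ x⟩⟩,
    ⟨DQ, hphiQmk, ⟨π, hπι, hψπ⟩, notors⟩⟩
end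

section
/- Let f ∈ W[u] ⊆ 𝔖 be a monic polynomial of degree b ≥ 1 all of whose non-leading coefficients are divisible by p (a distinguished polynomial, so f ≡ u^b mod p). Then there is no unit z₀ of 𝔖 and no natural number j such that φ(f) = z₀ · f · E^j in 𝔖. (This non-existence is the key step in the proof of Lemma 6.2(3).) -/
open PowerSeries

private lemma aux_map_distinguished {R S : Type*} [CommRing R] [CommRing S]
    (q : R →+* S) (g : Polynomial R) (b : ℕ) (hg : g.Monic) (hdeg : g.natDegree = b)
    (h : ∀ i < b, q (g.coeff i) = 0) :
    PowerSeries.map q (g : PowerSeries R) = (PowerSeries.X : PowerSeries S) ^ b := by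
  ext n
  rw [PowerSeries.coeff_map, Polynomial.coeff_coe, PowerSeries.coeff_X_pow]
  rcases lt_trichotomy n b with hn | rfl | hn
  · rw [h n hn, if_neg hn.ne]
  · rw [← hdeg, hg.coeff_natDegree, map_one, if_pos rfl]
  · rw [Polynomial.coeff_eq_zero_of_natDegree_lt (hdeg ▸ hn), map_zero, if_neg hn.ne']

private lemma aux_order_pow {R : Type*} [CommRing R] [IsDomain R]
    (F : PowerSeries R) (j : ℕ) (hF : F.order = 0) : (F ^ j).order = 0 := by
  induction j with
  | zero => rw [pow_zero]; exact PowerSeries.order_one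
  | succ n ih => rw [pow_succ, PowerSeries.order_mul, ih, hF, add_zero]

/-- Key step in the proof of Lemma 6.2(3): if `f ∈ W(k)[u]` is a monic distinguished
polynomial of degree `b ≥ 1` (all non-leading coefficients divisible by `p`), then
there are no unit `z₀ ∈ 𝔖ˣ` and natural number `j` with `φ(f) = z₀ · f · E^j`. -/
theorem stmt_10
    (p : ℕ) [Fact p.Prime] (k : Type) [Field k] [CharP k p] [PerfectRing k p]
    (e : ℕ) (he : 1 ≤ e)
    (φ : PowerSeries (WittVector p k) →+* PowerSeries (WittVector p k))
    (hφ : ∀ (F : PowerSeries (WittVector p k)) (n : ℕ),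
      PowerSeries.coeff (R := WittVector p k) n (φ F) =
        if p ∣ n then
          (WittVector.frobeniusEquiv p k) (PowerSeries.coeff (R := WittVector p k) (n / p) F)
        else 0)
    (E : Polynomial (WittVector p k)) (hEmonic : E.Monic) (hEdeg : E.natDegree = e)
    (hEcoeff : ∀ i < e, (p : WittVector p k) ∣ E.coeff i)
    (hEconst : ¬ (p : WittVector p k) ^ 2 ∣ E.coeff 0)
    (f : Polynomial (WittVector p k)) (hfmonic : f.Monic) (b : ℕ) (hb : 1 ≤ b)
    (hfdeg : f.natDegree = b)
    (hfcoeff : ∀ i < b, (p : WittVector p k) ∣ f.coeff i) :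
    ¬ ∃ (z₀ : (PowerSeries (WittVector p k))ˣ) (j : ℕ),
        φ (f : PowerSeries (WittVector p k)) =
          (z₀ : PowerSeries (WittVector p k)) * (f : PowerSeries (WittVector p k)) *
            (E : PowerSeries (WittVector p k)) ^ j := by
  rintro ⟨z₀, j, hEq⟩
  have hp : p.Prime := Fact.out
  have hp0 : 0 < p := hp.pos
  have hpW : Irreducible (p : WittVector p k) := WittVector.irreducible p
  have hpW0 : (p : WittVector p k) ≠ 0 := hpW.ne_zero
  -- the constant coefficient of `E` is `p * c` with `c` not divisible by `p`
  obtain ⟨c, hc⟩ := hEcoeff 0 he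
  have hpc : ¬ (p : WittVector p k) ∣ c := by
    rintro ⟨d, hd⟩
    exact hEconst ⟨d, by rw [hc, hd]; ring⟩
  have hE0 : E.coeff 0 ≠ 0 := fun h => hEconst (h ▸ dvd_zero _)
  ---- Step A : reduce mod `p` to obtain `p * b = b + e * j` and hence `j ≠ 0`.
  set q : WittVector p k →+* WittVector p k ⧸ Ideal.span {(p : WittVector p k)} :=
    Ideal.Quotient.mk _ with hqdef
  have hq : ∀ x, (p : WittVector p k) ∣ x → q x = 0 := fun x hx =>
    Ideal.Quotient.eq_zero_iff_mem.2 (Ideal.mem_span_singleton.2 hx)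
  have : Nontrivial (WittVector p k ⧸ Ideal.span {(p : WittVector p k)}) :=
    Ideal.Quotient.nontrivial_iff.mpr (by
      rw [Ne, Ideal.span_singleton_eq_top]; exact hpW.not_isUnit)
  have hmapf : PowerSeries.map q (f : PowerSeries _) = PowerSeries.X ^ b :=
    aux_map_distinguished q f b hfmonic hfdeg fun i hi => hq _ (hfcoeff i hi)
  have hmapE : PowerSeries.map q (E : PowerSeries _) = PowerSeries.X ^ e :=
    aux_map_distinguished q E e hEmonic hEdeg fun i hi => hq _ (hEcoeff i hi)
  have hmapφf : PowerSeries.map q (φ (f : PowerSeries _)) = PowerSeries.X ^ (p * b) := by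
    ext n
    rw [PowerSeries.coeff_map, hφ, PowerSeries.coeff_X_pow]
    by_cases hpn : p ∣ n
    · rw [if_pos hpn]
      obtain ⟨t, rfl⟩ := hpn
      rw [Nat.mul_div_cancel_left t hp0]
      rcases lt_trichotomy t b with ht | rfl | ht
      · obtain ⟨x, hx⟩ := hfcoeff t ht
        rw [Polynomial.coeff_coe, hx, map_mul, map_natCast, hq _ (Dvd.intro _ rfl)]
        rw [if_neg (by
          intro h
          exact ht.ne (Nat.eq_of_mul_eq_mul_left hp0 h))]
      · rw [Polynomial.coeff_coe, ← hfdeg, hfmonic.coeff_natDegree, map_one, map_one,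
          if_pos rfl]
      · rw [Polynomial.coeff_coe, Polynomial.coeff_eq_zero_of_natDegree_lt (hfdeg ▸ ht),
          map_zero, map_zero, if_neg (by
            intro h
            exact ht.ne' (Nat.eq_of_mul_eq_mul_left hp0 h))]
    · rw [if_neg hpn, map_zero, if_neg (by
        rintro rfl
        exact hpn (dvd_mul_right p b))]
  have hA := congrArg (PowerSeries.map q) hEq
  rw [map_mul, map_mul, map_pow, hmapφf, hmapf, hmapE, ← pow_mul, mul_assoc, ← pow_add] at hA
  have hzq : IsUnit (PowerSeries.map q (z₀ : PowerSeries (WittVector p k))) :=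
    z₀.isUnit.map _
  have hdeg_eq : p * b = b + e * j := by
    by_contra hne
    rcases lt_or_gt_of_ne hne with h | h
    · have h1 := congrArg (PowerSeries.coeff (p * b)) hA
      rw [PowerSeries.coeff_X_pow, if_pos rfl, PowerSeries.coeff_mul_X_pow',
        if_neg (not_le.2 h)] at h1
      exact one_ne_zero h1
    · have h1 := congrArg (PowerSeries.coeff (b + e * j)) hA
      rw [PowerSeries.coeff_X_pow, if_neg h.ne, PowerSeries.coeff_mul_X_pow',
        if_pos le_rfl, Nat.sub_self, PowerSeries.coeff_zero_eq_constantCoeff] at h1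
      exact (hzq.map (PowerSeries.constantCoeff)).ne_zero h1.symm
  have hj : j ≠ 0 := by
    rintro rfl
    simp only [mul_zero, add_zero] at hdeg_eq
    have h2 := hp.two_le
    nlinarith
  ---- Step B : comparison of `u`-adic orders shows `f.coeff 0 ≠ 0`.
  have hFne : (f : PowerSeries (WittVector p k)) ≠ 0 := by
    intro h
    have h1 := congrArg (PowerSeries.coeff b) h
    rw [Polynomial.coeff_coe, ← hfdeg, hfmonic.coeff_natDegree, map_zero] at h1
    exact one_ne_zero h1
  obtain ⟨m, hm⟩ := WithTop.ne_top_iff_exists.1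
    (by simpa [PowerSeries.order_eq_top] using hFne :
      (f : PowerSeries (WittVector p k)).order ≠ ⊤)
  obtain ⟨hcm, hlow⟩ := PowerSeries.order_eq_nat.1 hm.symm
  have hordφ : (φ (f : PowerSeries (WittVector p k))).order = ((p * m : ℕ) : ℕ∞) := by
    rw [PowerSeries.order_eq_nat]
    constructor
    · rw [hφ, if_pos (dvd_mul_right p m), Nat.mul_div_cancel_left m hp0]
      intro h0
      exact hcm (by rwa [map_eq_zero_iff _ (RingEquiv.injective _)] at h0)
    · intro i hi
      rw [hφ]
      by_cases hpi : p ∣ i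
      · rw [if_pos hpi, hlow _ (Nat.div_lt_of_lt_mul hi), map_zero]
      · rw [if_neg hpi]
  have hz0 : (PowerSeries.constantCoeff (R := WittVector p k)) (z₀ : PowerSeries _) ≠ 0 :=
    (z₀.isUnit.map (PowerSeries.constantCoeff)).ne_zero
  have hordz : (z₀ : PowerSeries (WittVector p k)).order = 0 := by
    simpa using PowerSeries.order_le 0
      (by simpa [PowerSeries.coeff_zero_eq_constantCoeff] using hz0)
  have hordE : (E : PowerSeries (WittVector p k)).order = 0 := by
    simpa using PowerSeries.order_le 0 (by simpa [Polynomial.coeff_coe] using hE0)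
  have horder := congrArg PowerSeries.order hEq
  rw [hordφ, PowerSeries.order_mul, PowerSeries.order_mul, hordz,
    aux_order_pow _ j hordE, zero_add, add_zero, ← hm] at horder
  have hm0 : m = 0 := by
    have h1 : p * m = m := Nat.cast_inj.mp horder
    nlinarith [hp.two_le]
  have hf0 : f.coeff 0 ≠ 0 := by
    subst hm0
    simpa [Polynomial.coeff_coe] using hcm
  ---- Step C : compare constant coefficients and use the `p`-adic valuation on `W(k)`.
  have hconst : ∀ g : Polynomial (WittVector p k),
      PowerSeries.constantCoeff (R := WittVector p k) (g : PowerSeries _) = g.coeff 0 := fun g => by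
    rw [← PowerSeries.coeff_zero_eq_constantCoeff, Polynomial.coeff_coe]
  have hL : PowerSeries.constantCoeff (R := WittVector p k) (φ (f : PowerSeries _)) =
      WittVector.frobeniusEquiv p k (f.coeff 0) := by
    rw [← PowerSeries.coeff_zero_eq_constantCoeff, hφ, if_pos (dvd_zero p), Nat.zero_div,
      Polynomial.coeff_coe]
  have hC := congrArg (PowerSeries.constantCoeff (R := WittVector p k)) hEq
  rw [map_mul, map_mul, map_pow, hconst, hconst, hL, hc] at hC
  obtain ⟨n, w, hw⟩ := WittVector.exists_eq_pow_p_mul' (f.coeff 0) hf0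
  rw [hw, map_mul, map_pow, map_natCast] at hC
  have hcancel : WittVector.frobeniusEquiv p k (w : WittVector p k) =
      PowerSeries.constantCoeff (R := WittVector p k) (z₀ : PowerSeries _) * w *
        ((p : WittVector p k) * c) ^ j := by
    refine mul_left_cancel₀ (pow_ne_zero n hpW0) ?_
    linear_combination hC
  have hdvd : (p : WittVector p k) ∣ WittVector.frobeniusEquiv p k (w : WittVector p k) := by
    rw [hcancel]
    exact Dvd.dvd.mul_left (dvd_pow (dvd_mul_right _ _) hj) _
  exact hpW.not_isUnit
    (isUnit_of_dvd_unit hdvd (w.isUnit.map (WittVector.frobeniusEquiv p k)))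
end

section
/- Let k be a perfect field of characteristic p, R = k⟦u⟧ the power series ring over k, M a finite free R-module, and σ : M → M an additive map that is semilinear over the p-power Frobenius of R, i.e. σ(a • x) = a^p • σ(x) for all a ∈ R and x ∈ M. Let N ⊆ M be an R-submodule with σ(N) ⊆ N such that the quotient M/N is killed by a power of u. Write φ*N := R ⊗_{Frob,R} N for the base change of N along the Frobenius a ↦ a^p of R, and let 1⊗σ : φ*N → N be the R-linear map a⊗x ↦ a•σ(x). Suppose there exist a natural number c and an R-linear map ψ : N → φ*N such that (1⊗σ) ∘ ψ = u^c • id_N and ψ ∘ (1⊗σ) = u^c • id_{φ*N}. If c < p − 1, then N = M. (This is the key module-theoretic step in the proof of Corollary 7.13 (cor-small-Breuil), applied with c = e·i.) -/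
open PowerSeries

/-- Coordinates composed with `fr` give a `fr`-semilinear map to `Fin nr → R`. -/
noncomputable def coordSL {k : Type} [Field k] (fr : PowerSeries k →+* PowerSeries k)
    {M : Type} [AddCommGroup M] [Module (PowerSeries k) M] {N : Submodule (PowerSeries k) M}
    {nr : ℕ} (b : Module.Basis (Fin nr) (PowerSeries k) N) :
    N →ₛₗ[fr] (Fin nr → PowerSeries k) where
  toFun x i := fr (b.repr x i)
  map_add' x y := by funext i; simp
  map_smul' a x := by funext i; simp [mul_comm]

/-- Key module-theoretic step in the proof of Corollary 7.13: let `R = k⟦u⟧` with `k` a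
perfect field of characteristic `p`, `M` a finite free `R`-module, `σ : M → M` an
additive map semilinear over the `p`-power Frobenius `fr` of `R`, and `N ⊆ M` a
submodule with `σ(N) ⊆ N` and `M/N` killed by a power of `u`.  If `N` carries a map
`ψ : N → φ*N` with `(1⊗σ) ∘ ψ = u^c • id` and `ψ ∘ (1⊗σ) = u^c • id` for some
`c < p - 1`, then `N = M`. -/
theorem stmt_13 (p : ℕ) [Fact p.Prime] (k : Type) [Field k] [CharP k p] [PerfectRing k p]
    (fr : PowerSeries k →+* PowerSeries k) (hfr : ∀ a : PowerSeries k, fr a = a ^ p)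
    (M : Type) [AddCommGroup M] [Module (PowerSeries k) M]
    [Module.Finite (PowerSeries k) M] [Module.Free (PowerSeries k) M]
    (σ : M →+ M) (hσ : ∀ (a : PowerSeries k) (x : M), σ (a • x) = a ^ p • σ x)
    (N : Submodule (PowerSeries k) M) (hσN : ∀ x ∈ N, σ x ∈ N)
    (hquot : ∃ l : ℕ, ∀ x : M, (PowerSeries.X : PowerSeries k) ^ l • x ∈ N)
    (P : Type) [AddCommGroup P] [Module (PowerSeries k) P]
    (ι : N →ₛₗ[fr] P) (hbc : IsSemilinearBaseChange fr ι)
    (θ : P →ₗ[PowerSeries k] N) (hθ : ∀ x : N, ((θ (ι x)) : M) = σ (x : M))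
    (c : ℕ) (hc : c < p - 1)
    (ψ : N →ₗ[PowerSeries k] P)
    (hθψ : ∀ x : N, θ (ψ x) = (PowerSeries.X : PowerSeries k) ^ c • x)
    (hψθ : ∀ y : P, ψ (θ y) = (PowerSeries.X : PowerSeries k) ^ c • y) :
    N = ⊤ := by
  classical
  obtain ⟨nr, b⟩ := Submodule.basisOfPid (Module.Free.chooseBasis (PowerSeries k) M) N
  obtain ⟨h, hh, -⟩ := hbc (Fin nr → PowerSeries k) (coordSL fr b)
  have hXne : (X : PowerSeries k) ≠ 0 := X_ne_zero
  have hp : 2 ≤ p := (Fact.out : p.Prime).two_le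
  set l := Nat.find hquot with hldef
  have hl : ∀ x : M, (X : PowerSeries k) ^ l • x ∈ N := Nat.find_spec hquot
  rcases Nat.eq_zero_or_pos l with hl0 | hl1
  · rw [eq_top_iff]
    intro x _
    have := hl x
    rwa [hl0, pow_zero, one_smul] at this
  · exfalso
    have key : ∀ x : M, (X : PowerSeries k) ^ (l - 1) • x ∈ N := by
      intro x
      set n : N := ⟨(X : PowerSeries k) ^ l • x, hl x⟩ with hndef
      set m : N := ⟨(X : PowerSeries k) ^ l • σ x, hl (σ x)⟩ with hmdef
      have ht : (p - 1) * l = c + ((p - 1) * l - c) := by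
        have : c + 1 ≤ (p - 1) * l := by
          calc c + 1 ≤ p - 1 := hc
          _ ≤ (p - 1) * l := Nat.le_mul_of_pos_right _ hl1
        omega
      set t := (p - 1) * l - c with htdef
      have ht1 : 1 ≤ t := by
        have : c + 1 ≤ (p - 1) * l := by
          calc c + 1 ≤ p - 1 := hc
          _ ≤ (p - 1) * l := Nat.le_mul_of_pos_right _ hl1
        omega
      have hθn : θ (ι n) = (X : PowerSeries k) ^ ((p - 1) * l) • m := by
        apply Subtype.ext
        rw [Submodule.coe_smul]
        rw [hθ n]
        show σ ((X : PowerSeries k) ^ l • x)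
            = (X : PowerSeries k) ^ ((p - 1) * l) • ((X : PowerSeries k) ^ l • σ x)
        rw [hσ, smul_smul, ← pow_mul, ← pow_add]
        have hexp : l * p = (p - 1) * l + l := by
          rw [Nat.sub_one_mul, mul_comm l p]
          have : l ≤ p * l := Nat.le_mul_of_pos_left _ (by omega)
          omega
        rw [hexp]
      have heq : (X : PowerSeries k) ^ c • ι n = (X : PowerSeries k) ^ ((p - 1) * l) • ψ m := by
        rw [← hψθ (ι n), hθn, map_smul]
      have hdvd : ∀ i, (X : PowerSeries k) ∣ b.repr n i := by
        intro i
        have h1 := congrFun (congrArg h heq) i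
        rw [map_smul, map_smul, hh] at h1
        have h2 : (X : PowerSeries k) ^ c * (b.repr n i) ^ p
            = (X : PowerSeries k) ^ c * ((X : PowerSeries k) ^ t * h (ψ m) i) := by
          have : coordSL fr b n i = (b.repr n i) ^ p := by
            simp [coordSL, hfr]
          rw [← this]
          calc (X : PowerSeries k) ^ c * coordSL fr b n i
              = ((X : PowerSeries k) ^ c • coordSL fr b n) i := rfl
          _ = ((X : PowerSeries k) ^ ((p - 1) * l) • h (ψ m)) i := by rw [h1]
          _ = (X : PowerSeries k) ^ ((p - 1) * l) * h (ψ m) i := rfl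
          _ = _ := by rw [ht, pow_add, mul_assoc]
        have h3 := mul_left_cancel₀ (pow_ne_zero c hXne) h2
        have h4 : (X : PowerSeries k) ∣ (b.repr n i) ^ p := by
          refine ⟨(X : PowerSeries k) ^ (t - 1) * h (ψ m) i, ?_⟩
          rw [h3, ← mul_assoc]
          congr 1
          rw [← pow_succ']
          congr 1
          omega
        exact X_prime.dvd_of_dvd_pow h4
      -- write n = X • n''
      set n'' : N := ∑ i, (hdvd i).choose • b i with hn''def
      have hXn'' : (X : PowerSeries k) • n'' = n := by
        rw [hn''def, Finset.smul_sum]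
        have : ∀ i ∈ Finset.univ, (X : PowerSeries k) • (hdvd i).choose • b i
            = b.repr n i • b i := by
          intro i _
          rw [smul_smul, ← (hdvd i).choose_spec]
        rw [Finset.sum_congr rfl this, b.sum_repr]
      have hM : (X : PowerSeries k) • ((X : PowerSeries k) ^ (l - 1) • x)
          = (X : PowerSeries k) • (n'' : M) := by
        have := congrArg (Subtype.val : N → M) hXn''
        rw [Submodule.coe_smul] at this
        rw [this]
        show (X : PowerSeries k) • (X : PowerSeries k) ^ (l - 1) • x
            = (X : PowerSeries k) ^ l • x
        rw [smul_smul, ← pow_succ']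
        congr 2
        omega
      have := smul_right_injective M hXne hM
      rw [this]
      exact n''.2
    exact Nat.find_min hquot (show l - 1 < l by omega) key
end

section
/- Let p be a prime, k a perfect field of characteristic p, and e ≥ 1 a natural number. Let R be the quotient of the polynomial ring k[X₀, X₁, X₂, …] in countably many variables by the ideal generated by X₀^{p·e} together with X_i^p for all i ≥ 1. Then R is a coherent ring: every finitely generated ideal of R is finitely presented as an R-module. (This is the base case n = 1 of Lemma 7.1, via the identification S/p ≅ k[u]/u^{pe} ⊗_k k[u₁,u₂,…]/(u_i^p).) -/
noncomputable section
set_option maxHeartbeats 800000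
set_option maxSynthPendingDepth 5
set_option synthInstance.maxHeartbeats 1000000

open TensorProduct MvPolynomial

section Concrete

variable (p e N : ℕ) (k : Type) [Field k]

private def bigI : Ideal (MvPolynomial ℕ k) :=
  Ideal.span (insert (X 0 ^ (p * e)) {f : MvPolynomial ℕ k | ∃ i : ℕ, 1 ≤ i ∧ f = X i ^ p})

private abbrev Qr := MvPolynomial ℕ k ⧸ bigI p e k

private def Ia : Ideal (MvPolynomial {i : ℕ // i ≤ N} k) :=
  Ideal.span (insert (X (⟨0, Nat.zero_le N⟩ : {i : ℕ // i ≤ N}) ^ (p * e))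
    {f : MvPolynomial {i : ℕ // i ≤ N} k | ∃ a : {i : ℕ // i ≤ N}, 1 ≤ a.1 ∧ f = X a ^ p})

private abbrev Aa := MvPolynomial {i : ℕ // i ≤ N} k ⧸ Ia p e N k

private def Jb : Ideal (MvPolynomial {i : ℕ // ¬ i ≤ N} k) :=
  Ideal.span {f : MvPolynomial {i : ℕ // ¬ i ≤ N} k | ∃ b : {i : ℕ // ¬ i ≤ N}, f = X b ^ p}

private abbrev Bb := MvPolynomial {i : ℕ // ¬ i ≤ N} k ⧸ Jb p N k

-- the map k[X_a : a ≤ N] → Q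
private def θ0 : MvPolynomial {i : ℕ // i ≤ N} k →ₐ[k] Qr p e k :=
  (Ideal.Quotient.mkₐ k (bigI p e k)).comp
    (MvPolynomial.rename (Subtype.val : {i : ℕ // i ≤ N} → ℕ))

private lemma θ0_apply (q : MvPolynomial {i : ℕ // i ≤ N} k) :
    θ0 p e N k q = Ideal.Quotient.mk (bigI p e k) (rename Subtype.val q) := rfl

private lemma θ0_vanish : ∀ x ∈ Ia p e N k, θ0 p e N k x = 0 := by
  intro x hx
  have hle : Ia p e N k ≤ RingHom.ker (θ0 p e N k).toRingHom := by
    rw [Ia, Ideal.span_le]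
    rintro f hf
    refine SetLike.mem_coe.mpr (RingHom.mem_ker.mpr ?_)
    show θ0 p e N k f = 0
    rcases hf with rfl | ⟨a, ha, rfl⟩
    · rw [θ0_apply, map_pow, rename_X, Ideal.Quotient.eq_zero_iff_mem]
      exact Ideal.subset_span (Set.mem_insert _ _)
    · rw [θ0_apply, map_pow, rename_X, Ideal.Quotient.eq_zero_iff_mem]
      exact Ideal.subset_span (Set.mem_insert_of_mem _ ⟨a.1, ha, rfl⟩)
  exact RingHom.mem_ker.mp (hle hx)

private def θbar : Aa p e N k →ₐ[k] Qr p e k :=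
  Ideal.Quotient.liftₐ (Ia p e N k) (θ0 p e N k) (θ0_vanish p e N k)

private lemma θbar_mk (q : MvPolynomial {i : ℕ // i ≤ N} k) :
    θbar p e N k (Ideal.Quotient.mk _ q)
      = Ideal.Quotient.mk (bigI p e k) (rename Subtype.val q) := rfl

private def algAQ : Algebra (Aa p e N k) (Qr p e k) := (θbar p e N k).toRingHom.toAlgebra

attribute [local instance] algAQ

private lemma algebraMap_AQ (q : MvPolynomial {i : ℕ // i ≤ N} k) :
    algebraMap (Aa p e N k) (Qr p e k) (Ideal.Quotient.mk _ q)
      = Ideal.Quotient.mk (bigI p e k) (rename Subtype.val q) := rfl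

-- the map B → Q
private def β0 : MvPolynomial {i : ℕ // ¬ i ≤ N} k →ₐ[k] Qr p e k :=
  (Ideal.Quotient.mkₐ k (bigI p e k)).comp
    (MvPolynomial.rename (Subtype.val : {i : ℕ // ¬ i ≤ N} → ℕ))

private lemma β0_vanish : ∀ x ∈ Jb p N k, β0 p e N k x = 0 := by
  intro x hx
  have hle : Jb p N k ≤ RingHom.ker (β0 p e N k).toRingHom := by
    rw [Jb, Ideal.span_le]
    rintro f ⟨b, rfl⟩
    refine SetLike.mem_coe.mpr (RingHom.mem_ker.mpr ?_)
    show β0 p e N k (X b ^ p) = 0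
    show Ideal.Quotient.mk (bigI p e k) (rename Subtype.val (X b ^ p)) = 0
    rw [map_pow, rename_X, Ideal.Quotient.eq_zero_iff_mem]
    have hb : 1 ≤ b.1 := by have := b.2; omega
    exact Ideal.subset_span (Set.mem_insert_of_mem _ ⟨b.1, hb, rfl⟩)
  exact RingHom.mem_ker.mp (hle hx)

private def βbar : Bb p N k →ₐ[k] Qr p e k :=
  Ideal.Quotient.liftₐ (Jb p N k) (β0 p e N k) (β0_vanish p e N k)

private lemma βbar_mk (q : MvPolynomial {i : ℕ // ¬ i ≤ N} k) :
    βbar p e N k (Ideal.Quotient.mk _ q)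
      = Ideal.Quotient.mk (bigI p e k) (rename Subtype.val q) := rfl

private lemma tower_kAQ : IsScalarTower k (Aa p e N k) (Qr p e k) := by
  refine ⟨fun c a q => ?_⟩
  have h3 : ∀ (a : Aa p e N k) (x : Qr p e k), a • x = θbar p e N k a * x := fun _ _ => rfl
  have hQ : ∀ (c : k) (x : Qr p e k), c • x = algebraMap k (Qr p e k) c * x :=
    fun c x => Algebra.smul_def c x
  have hA : ∀ (c : k) (x : Aa p e N k), c • x = algebraMap k (Aa p e N k) c * x :=
    fun c x => Algebra.smul_def c x
  rw [h3, hA, map_mul, (θbar p e N k).commutes, h3, hQ, mul_assoc]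

attribute [local instance] tower_kAQ

private def uQ : (Aa p e N k) ⊗[k] (Bb p N k) →ₐ[Aa p e N k] Qr p e k :=
  Algebra.TensorProduct.lift (Algebra.ofId _ _) (βbar p e N k) (fun _ _ => Commute.all _ _)

-- the inverse map
private def v0 : MvPolynomial ℕ k →+* (Aa p e N k) ⊗[k] (Bb p N k) :=
  MvPolynomial.eval₂Hom (algebraMap k _)
    (fun i => if h : i ≤ N
      then (Ideal.Quotient.mk (Ia p e N k) (X ⟨i, h⟩)) ⊗ₜ 1
      else 1 ⊗ₜ (Ideal.Quotient.mk (Jb p N k) (X ⟨i, h⟩)))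

private lemma v0_vanish : ∀ x ∈ bigI p e k, v0 p e N k x = 0 := by
  intro x hx
  have hle : bigI p e k ≤ RingHom.ker (v0 p e N k) := by
    rw [bigI, Ideal.span_le]
    rintro f hf
    refine SetLike.mem_coe.mpr (RingHom.mem_ker.mpr ?_)
    rcases hf with rfl | ⟨i, hi, rfl⟩
    · rw [map_pow]
      have h0 : (0 : ℕ) ≤ N := Nat.zero_le N
      rw [show v0 p e N k (X 0) = (Ideal.Quotient.mk (Ia p e N k) (X ⟨0, h0⟩)) ⊗ₜ 1 by
        simp [v0, h0]]
      have hz : Ideal.Quotient.mk (Ia p e N k) (X ⟨0, h0⟩ ^ (p * e)) = 0 :=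
        Ideal.Quotient.eq_zero_iff_mem.mpr
          (by rw [Ia]; exact Ideal.subset_span (Set.mem_insert _ _))
      rw [Algebra.TensorProduct.tmul_pow, one_pow, ← map_pow, hz, TensorProduct.zero_tmul]
    · rw [map_pow]
      by_cases h : i ≤ N
      · rw [show v0 p e N k (X i) = (Ideal.Quotient.mk (Ia p e N k) (X ⟨i, h⟩)) ⊗ₜ 1 by
          simp [v0, h]]
        have hz : Ideal.Quotient.mk (Ia p e N k) (X ⟨i, h⟩ ^ p) = 0 :=
          Ideal.Quotient.eq_zero_iff_mem.mpr
            (by rw [Ia]; exact Ideal.subset_span (Set.mem_insert_of_mem _ ⟨⟨i, h⟩, hi, rfl⟩))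
        rw [Algebra.TensorProduct.tmul_pow, one_pow, ← map_pow, hz, TensorProduct.zero_tmul]
      · rw [show v0 p e N k (X i) = 1 ⊗ₜ (Ideal.Quotient.mk (Jb p N k) (X ⟨i, h⟩)) by
          simp [v0, h]]
        have hz : Ideal.Quotient.mk (Jb p N k) (X ⟨i, h⟩ ^ p) = 0 :=
          Ideal.Quotient.eq_zero_iff_mem.mpr
            (by rw [Jb]; exact Ideal.subset_span ⟨⟨i, h⟩, rfl⟩)
        rw [Algebra.TensorProduct.tmul_pow, one_pow, ← map_pow, hz, TensorProduct.tmul_zero]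
  exact RingHom.mem_ker.mp (hle hx)

private lemma uQ_tmul (a : Aa p e N k) (b : Bb p N k) :
    uQ p e N k (a ⊗ₜ b) = θbar p e N k a * βbar p e N k b :=
  Algebra.TensorProduct.lift_tmul _ _ _ _ _

private def vQ : Qr p e k →+* (Aa p e N k) ⊗[k] (Bb p N k) :=
  Ideal.Quotient.lift (bigI p e k) (v0 p e N k) (v0_vanish p e N k)

private lemma v0_rename_le (q : MvPolynomial {i : ℕ // i ≤ N} k) :
    v0 p e N k (rename Subtype.val q) = (Ideal.Quotient.mk (Ia p e N k) q) ⊗ₜ 1 := by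
  have h : (v0 p e N k).comp (rename (Subtype.val : {i : ℕ // i ≤ N} → ℕ)).toRingHom
      = (Algebra.TensorProduct.includeLeftRingHom).comp
          (Ideal.Quotient.mk (Ia p e N k)) := by
    apply MvPolynomial.ringHom_ext
    · intro c
      simp [v0, Algebra.TensorProduct.algebraMap_apply]
      rfl
    · intro a
      simp only [RingHom.comp_apply, AlgHom.toRingHom_eq_coe, RingHom.coe_coe, rename_X]
      rw [show v0 p e N k (X a.1) = (Ideal.Quotient.mk (Ia p e N k) (X ⟨a.1, a.2⟩)) ⊗ₜ 1 by
        simp [v0, a.2]]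
      rfl
  exact RingHom.congr_fun h q

private lemma v0_rename_gt (q : MvPolynomial {i : ℕ // ¬ i ≤ N} k) :
    v0 p e N k (rename Subtype.val q) = 1 ⊗ₜ (Ideal.Quotient.mk (Jb p N k) q) := by
  have h : (v0 p e N k).comp (rename (Subtype.val : {i : ℕ // ¬ i ≤ N} → ℕ)).toRingHom
      = (Algebra.TensorProduct.includeRight.toRingHom).comp
          (Ideal.Quotient.mk (Jb p N k)) := by
    apply MvPolynomial.ringHom_ext
    · intro c
      simp only [RingHom.comp_apply, AlgHom.toRingHom_eq_coe, RingHom.coe_coe, rename_C]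
      rw [show v0 p e N k (C c) = algebraMap k _ c by simp [v0],
        show Ideal.Quotient.mk (Jb p N k) (C c) = algebraMap k (Bb p N k) c from rfl,
        AlgHom.commutes]
    · intro b
      simp only [RingHom.comp_apply, AlgHom.toRingHom_eq_coe, RingHom.coe_coe, rename_X]
      rw [show v0 p e N k (X b.1) = 1 ⊗ₜ (Ideal.Quotient.mk (Jb p N k) (X ⟨b.1, b.2⟩)) by
        simp [v0, b.2]]
      rfl
  exact RingHom.congr_fun h q

private lemma uv : ∀ x : Qr p e k, uQ p e N k (vQ p e N k x) = x := by
  have h : ((uQ p e N k).toRingHom.comp (vQ p e N k)).comp (Ideal.Quotient.mk (bigI p e k))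
      = Ideal.Quotient.mk (bigI p e k) := by
    apply MvPolynomial.ringHom_ext
    · intro c
      simp only [RingHom.comp_apply]
      rw [show (vQ p e N k) (Ideal.Quotient.mk (bigI p e k) (C c)) = v0 p e N k (C c) from rfl]
      rw [show v0 p e N k (C c) = algebraMap k _ c by simp [v0]]
      rw [show (uQ p e N k).toRingHom (algebraMap k ((Aa p e N k) ⊗[k] (Bb p N k)) c)
          = algebraMap k (Qr p e k) c from (uQ p e N k).toRingHom.congr_arg rfl ▸
            ((uQ p e N k).restrictScalars k).commutes c]
      rfl
    · intro i
      simp only [RingHom.comp_apply]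
      rw [show (vQ p e N k) (Ideal.Quotient.mk (bigI p e k) (X i)) = v0 p e N k (X i) from rfl]
      by_cases h : i ≤ N
      · rw [show v0 p e N k (X i) = (Ideal.Quotient.mk (Ia p e N k) (X ⟨i, h⟩)) ⊗ₜ 1 by
          simp [v0, h]]
        show uQ p e N k _ = _
        rw [uQ_tmul, map_one, mul_one, θbar_mk, rename_X]
      · rw [show v0 p e N k (X i) = 1 ⊗ₜ (Ideal.Quotient.mk (Jb p N k) (X ⟨i, h⟩)) by
          simp [v0, h]]
        show uQ p e N k _ = _
        rw [uQ_tmul, map_one, one_mul, βbar_mk, rename_X]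
  intro x
  obtain ⟨f, rfl⟩ := Ideal.Quotient.mk_surjective x
  exact RingHom.congr_fun h f

private lemma vu : ∀ x : (Aa p e N k) ⊗[k] (Bb p N k), vQ p e N k (uQ p e N k x) = x := by
  intro x
  induction x using TensorProduct.induction_on with
  | zero => simp
  | add x y hx hy => rw [map_add, map_add, hx, hy]
  | tmul a b =>
      obtain ⟨q, rfl⟩ := Ideal.Quotient.mk_surjective a
      obtain ⟨r, rfl⟩ := Ideal.Quotient.mk_surjective b
      rw [uQ_tmul]
      rw [θbar_mk, βbar_mk, map_mul,
        show (vQ p e N k) (Ideal.Quotient.mk (bigI p e k) (rename Subtype.val q))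
          = v0 p e N k (rename Subtype.val q) from rfl,
        show (vQ p e N k) (Ideal.Quotient.mk (bigI p e k) (rename Subtype.val r))
          = v0 p e N k (rename Subtype.val r) from rfl,
        v0_rename_le, v0_rename_gt, Algebra.TensorProduct.tmul_mul_tmul, mul_one, one_mul]

private lemma u_bij : Function.Bijective (uQ p e N k) :=
  ⟨Function.LeftInverse.injective (vu p e N k),
   Function.RightInverse.surjective (uv p e N k)⟩

private lemma flatAQ : Module.Flat (Aa p e N k) (Qr p e k) :=
  Module.Flat.of_linearEquiv
    (LinearEquiv.ofBijective (uQ p e N k).toLinearMap (u_bij p e N k)).symm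

private lemma finite_le : Finite {i : ℕ // i ≤ N} := by
  exact (Set.finite_Iic N).to_subtype

private lemma noethA : IsNoetherianRing (Aa p e N k) := by
  haveI := finite_le N
  exact isNoetherianRing_of_surjective _ _ (Ideal.Quotient.mk (Ia p e N k))
    Ideal.Quotient.mk_surjective

end Concrete

section Abstract

variable {A R : Type} [CommRing A] [CommRing R] [Algebra A R]

private lemma range_liftBaseChange {M : Type} [AddCommGroup M] [Module A M]
    (l : M →ₗ[A] R) : LinearMap.range (l.liftBaseChange R) = Submodule.span R (Set.range l) := by
  apply le_antisymm
  · rintro _ ⟨x, rfl⟩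
    induction x using TensorProduct.induction_on with
    | zero => simp
    | tmul r m =>
        rw [LinearMap.liftBaseChange_tmul]
        exact Submodule.smul_mem _ _ (Submodule.subset_span ⟨m, rfl⟩)
    | add x y hx hy => rw [map_add]; exact add_mem hx hy
  · rw [Submodule.span_le]
    rintro _ ⟨m, rfl⟩
    exact ⟨1 ⊗ₜ m, by simp⟩

private lemma fp_of_ideal_map_of_flat [IsNoetherianRing A] [Module.Flat A R]
    (J : Ideal A) (I : Ideal R) (hI : I = J.map (algebraMap A R)) :
    Module.FinitePresentation R I := by
  classical
  haveI : Module.Finite A J := Module.Finite.iff_fg.mpr (IsNoetherian.noetherian J)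
  haveI : Module.FinitePresentation A J := Module.finitePresentation_of_finite A J
  let g0 : J →ₗ[A] R := (Algebra.linearMap A R).comp J.subtype
  let f : J →ₗ[A] I :=
    { toFun := fun x => ⟨algebraMap A R x.1, hI ▸ Ideal.mem_map_of_mem _ x.2⟩
      map_add' := fun x y => Subtype.ext (by simp)
      map_smul' := fun a x => Subtype.ext (by
        simp [Algebra.smul_def, smul_eq_mul, map_mul, Submodule.coe_smul]) }
  let φ : R ⊗[A] J →ₗ[R] I := f.liftBaseChange R
  let ψ : R ⊗[A] J →ₗ[R] R := I.subtype.comp φ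
  have hψ : ψ = g0.liftBaseChange R := by
    rw [show ψ = I.subtype ∘ₗ f.liftBaseChange R from rfl, LinearMap.liftBaseChange_comp]
    congr 1
  have hψinj : Function.Injective ψ := by
    have h1 : Function.Injective (J.subtype.lTensor R) :=
      Module.Flat.lTensor_preserves_injective_linearMap (M := R) J.subtype J.injective_subtype
    have hcomp : (ψ.restrictScalars A)
        = (TensorProduct.rid A R).toLinearMap ∘ₗ (J.subtype.lTensor R) := by
      apply TensorProduct.ext'
      intro r x
      simp [hψ, LinearMap.liftBaseChange_tmul, Algebra.smul_def, mul_comm, g0]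
    have : ⇑ψ = ⇑((TensorProduct.rid A R).toLinearMap ∘ₗ (J.subtype.lTensor R)) := by
      rw [← hcomp]; rfl
    rw [this]
    exact (TensorProduct.rid A R).injective.comp h1
  have hφinj : Function.Injective φ := fun x y hxy => hψinj (congrArg I.subtype hxy)
  have hφsurj : Function.Surjective φ := by
    rw [← LinearMap.range_eq_top]
    apply Submodule.map_injective_of_injective I.injective_subtype
    rw [Submodule.map_top, Submodule.range_subtype]
    have : Submodule.map I.subtype (LinearMap.range φ) = LinearMap.range ψ :=
      (LinearMap.range_comp _ _).symm
    rw [this, hψ, range_liftBaseChange]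
    have : Set.range g0 = (algebraMap A R) '' (J : Set A) := by
      ext x
      simp [g0]
    rw [this, hI]
    rfl
  exact Module.finitePresentation_of_surjective φ hφsurj
    (by rw [LinearMap.ker_eq_bot.mpr hφinj]; exact Submodule.fg_bot)

end Abstract

section Assemble

private lemma coherent_aux (p e : ℕ) (k : Type) [Field k] :
    ∀ I : Ideal (Qr p e k), I.FG → Module.FinitePresentation (Qr p e k) I := by
  classical
  intro I hfg
  obtain ⟨s, hs⟩ := hfg
  choose t ht using fun y : {x // x ∈ s} =>
    Ideal.Quotient.mk_surjective (I := bigI p e k) y.1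
  set N := Finset.univ.sup (fun y : {x // x ∈ s} => (t y).vars.sup id) with hN
  have hvars : ∀ y, ((t y).vars : Set ℕ)
      ⊆ Set.range (Subtype.val : {i : ℕ // i ≤ N} → ℕ) := by
    intro y j hj
    refine ⟨⟨j, ?_⟩, rfl⟩
    have h2 : (t y).vars.sup id ≤ N := by
      rw [hN]
      exact Finset.le_sup (f := fun z : {x // x ∈ s} => (t z).vars.sup id) (Finset.mem_univ y)
    exact le_trans (Finset.le_sup (f := id) hj) h2
  choose q hq using fun y : {x // x ∈ s} =>
    MvPolynomial.exists_rename_eq_of_vars_subset_range (t y)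
      (Subtype.val : {i : ℕ // i ≤ N} → ℕ) Subtype.val_injective (hvars y)
  letI := algAQ p e N k
  haveI := tower_kAQ p e N k
  haveI := flatAQ p e N k
  haveI := noethA p e N k
  refine fp_of_ideal_map_of_flat
    (Ideal.span (Set.range fun y : {x // x ∈ s} => Ideal.Quotient.mk (Ia p e N k) (q y))) I ?_
  rw [Ideal.map_span, ← Set.range_comp]
  have heq : (algebraMap (Aa p e N k) (Qr p e k))
      ∘ (fun y : {x // x ∈ s} => Ideal.Quotient.mk (Ia p e N k) (q y))
      = fun y : {x // x ∈ s} => (y : Qr p e k) := by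
    funext y
    show algebraMap (Aa p e N k) (Qr p e k) (Ideal.Quotient.mk (Ia p e N k) (q y)) = y.1
    rw [algebraMap_AQ, hq, ht]
  rw [heq, Subtype.range_coe_subtype, Finset.setOf_mem, hs]

end Assemble

/-- Base case (`n = 1`) of **Lemma 7.1**: the ring
`R = k[X₀, X₁, X₂, …]/(X₀^{p·e}, Xᵢ^p (i ≥ 1))` — which is `S/p` for Breuil's ring `S` —
is coherent: every finitely generated ideal of `R` is finitely presented as an
`R`-module. -/
theorem stmt_14 (p e : ℕ) [Fact p.Prime] (he : 1 ≤ e)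
    (k : Type) [Field k] [CharP k p] [PerfectRing k p] :
    ∀ I : Ideal (MvPolynomial ℕ k ⧸
        Ideal.span (insert (MvPolynomial.X 0 ^ (p * e))
          {f : MvPolynomial ℕ k | ∃ i : ℕ, 1 ≤ i ∧ f = MvPolynomial.X i ^ p})),
      I.FG → Module.FinitePresentation
        (MvPolynomial ℕ k ⧸
          Ideal.span (insert (MvPolynomial.X 0 ^ (p * e))
            {f : MvPolynomial ℕ k | ∃ i : ℕ, 1 ≤ i ∧ f = MvPolynomial.X i ^ p})) I :=
  coherent_aux p e k
end
end
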